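/- arXiv:2504.05010 — 12 statements merged into one kernel-verified Lean document; each statement's English description precedes it below -/
import Mathlib

section
/- For fixed r > 0, the function b(θ) = artanh(sinh(r)·tan(θ/2)) is strictly convex on the set of θ ∈ (0, π) for which sinh(r)·tan(θ/2) < 1. -/
open Real

noncomputable def artanh (x : ℝ) : ℝ := Real.log ((1 + x) / (1 - x)) / 2

noncomputable def arccot (x : ℝ) : ℝ := Real.pi / 2 - Real.arctan x

noncomputable def arcosh (x : ℝ) : ℝ := Real.log (x + Real.sqrt (x ^ 2 - 1))

lemma artanh_hasDerivAt {x : ℝ} (h1 : -1 < x) (h2 : x < 1) :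
    HasDerivAt _root_.artanh (1 / (1 - x ^ 2)) x := by
  have hev : _root_.artanh =ᶠ[nhds x]
      fun y => (Real.log (1 + y) - Real.log (1 - y)) / 2 := by
    filter_upwards [(isOpen_Ioo (a := (-1:ℝ)) (b := 1)).mem_nhds ⟨h1, h2⟩] with y hy
    unfold _root_.artanh
    rw [Real.log_div (by linarith [hy.1] : (1:ℝ) + y ≠ 0)
      (by linarith [hy.2] : (1:ℝ) - y ≠ 0)]
  have ha : HasDerivAt (fun y : ℝ => Real.log (1 + y)) (1 / (1 + x)) x := by
    have := (Real.hasDerivAt_log (by linarith : (1:ℝ) + x ≠ 0)).comp x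
      ((hasDerivAt_id x).const_add 1)
    simpa [Function.comp_def] using this
  have hb : HasDerivAt (fun y : ℝ => Real.log (1 - y)) (-(1 / (1 - x))) x := by
    have := (Real.hasDerivAt_log (by linarith : (1:ℝ) - x ≠ 0)).comp x
      ((hasDerivAt_id x).const_sub 1)
    simpa [Function.comp_def] using this
  have hd := (ha.sub hb).div_const 2
  have heq : (1 / (1 + x) - -(1 / (1 - x))) / 2 = 1 / (1 - x ^ 2) := by
    have h1' : (1:ℝ) + x ≠ 0 := by linarith
    have h2' : (1:ℝ) - x ≠ 0 := by linarith
    have h3' : (1:ℝ) - x ^ 2 ≠ 0 := by nlinarith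
    field_simp
    ring
  rw [heq] at hd
  exact hd.congr_of_eventuallyEq hev

theorem stmt2 (r : ℝ) (hr : 0 < r) :
    StrictConvexOn ℝ {θ : ℝ | θ ∈ Set.Ioo 0 π ∧ Real.sinh r * Real.tan (θ / 2) < 1}
      (fun θ => _root_.artanh (Real.sinh r * Real.tan (θ / 2))) := by
  set s := Real.sinh r with hs_def
  have hs : 0 < s := by rw [hs_def]; positivity
  set c := 2 * Real.arctan (1 / s) with hc_def
  have harc0 : 0 < Real.arctan (1 / s) := by
    have := Real.arctan_strictMono (show (0:ℝ) < 1 / s by positivity)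
    simpa [Real.arctan_zero] using this
  have harc2 : Real.arctan (1 / s) < π / 2 := Real.arctan_lt_pi_div_two _
  have hc0 : 0 < c := by rw [hc_def]; linarith
  have hcπ : c < π := by rw [hc_def]; linarith
  -- key facts for θ ∈ Ioo 0 c
  have key : ∀ θ ∈ Set.Ioo (0:ℝ) c,
      0 < Real.cos (θ / 2) ∧ 0 < Real.sin (θ / 2) ∧ s * Real.tan (θ / 2) < 1
        ∧ 0 < Real.tan (θ / 2) := by
    intro θ hθ
    have h1 : 0 < θ / 2 := by linarith [hθ.1]
    have h2 : θ / 2 < Real.arctan (1 / s) := by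
      have := hθ.2; rw [hc_def] at this; linarith
    have h3 : θ / 2 < π / 2 := by linarith
    have hcos : 0 < Real.cos (θ / 2) :=
      Real.cos_pos_of_mem_Ioo ⟨by linarith [Real.pi_pos], h3⟩
    have hsin : 0 < Real.sin (θ / 2) := Real.sin_pos_of_pos_of_lt_pi h1 (by linarith [Real.pi_pos])
    have htlt : Real.tan (θ / 2) < 1 / s := by
      have := Real.strictMonoOn_tan ⟨by linarith [Real.pi_pos], h3⟩
        ⟨by linarith [Real.pi_pos], harc2⟩ h2
      rwa [Real.tan_arctan] at this
    have htpos : 0 < Real.tan (θ / 2) := Real.tan_pos_of_pos_of_lt_pi_div_two h1 h3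
    refine ⟨hcos, hsin, ?_, htpos⟩
    calc s * Real.tan (θ / 2) < s * (1 / s) := by
          exact (mul_lt_mul_iff_right₀ hs).mpr htlt
      _ = 1 := by field_simp
  -- set equality
  have hset : {θ : ℝ | θ ∈ Set.Ioo 0 π ∧ s * Real.tan (θ / 2) < 1} = Set.Ioo 0 c := by
    ext θ
    simp only [Set.mem_setOf_eq, Set.mem_Ioo]
    constructor
    · rintro ⟨⟨h0, hπ⟩, hlt⟩
      refine ⟨h0, ?_⟩
      have h3 : θ / 2 < π / 2 := by linarith
      have htlt : Real.tan (θ / 2) < 1 / s := by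
        rw [lt_div_iff₀ hs]
        linarith [mul_comm s (Real.tan (θ / 2))]
      have := Real.arctan_strictMono htlt
      rw [Real.arctan_tan (by linarith) h3] at this
      rw [hc_def]; linarith
    · intro hθ
      have hπ : θ < π := lt_trans hθ.2 hcπ
      exact ⟨⟨hθ.1, hπ⟩, (key θ hθ).2.2.1⟩
  rw [hset]
  -- denominator function
  set g : ℝ → ℝ := fun θ => Real.cos (θ / 2) ^ 2 - s ^ 2 * Real.sin (θ / 2) ^ 2 with hg_def
  have hgpos : ∀ θ ∈ Set.Ioo (0:ℝ) c, 0 < g θ := by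
    intro θ hθ
    obtain ⟨hcos, hsin, hlt, htpos⟩ := key θ hθ
    have ht : Real.tan (θ / 2) = Real.sin (θ / 2) / Real.cos (θ / 2) :=
      Real.tan_eq_sin_div_cos _
    have h1 : s * Real.sin (θ / 2) < Real.cos (θ / 2) := by
      have := hlt
      rw [ht] at this
      calc s * Real.sin (θ / 2) = (s * (Real.sin (θ / 2) / Real.cos (θ / 2))) * Real.cos (θ / 2) := by
            field_simp
        _ < 1 * Real.cos (θ / 2) := by exact (mul_lt_mul_iff_left₀ hcos).mpr this
        _ = Real.cos (θ / 2) := one_mul _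
    have h2 : 0 < s * Real.sin (θ / 2) := by positivity
    rw [hg_def]
    simp only
    nlinarith
  -- derivative
  have hF : ∀ θ ∈ Set.Ioo (0:ℝ) c,
      HasDerivAt (fun θ => _root_.artanh (s * Real.tan (θ / 2))) (s / (2 * g θ)) θ := by
    intro θ hθ
    obtain ⟨hcos, hsin, hlt, htpos⟩ := key θ hθ
    have hinner : HasDerivAt (fun θ : ℝ => s * Real.tan (θ / 2))
        (s * (1 / Real.cos (θ / 2) ^ 2 * (2⁻¹))) θ := by
      have h1 : HasDerivAt (fun θ : ℝ => θ / 2) (2⁻¹) θ := by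
        simpa using (hasDerivAt_id θ).div_const 2
      exact ((Real.hasDerivAt_tan (ne_of_gt hcos)).comp θ h1).const_mul s
    have hupos : 0 < s * Real.tan (θ / 2) := by positivity
    have houter : HasDerivAt _root_.artanh (1 / (1 - (s * Real.tan (θ / 2)) ^ 2))
        (s * Real.tan (θ / 2)) :=
      artanh_hasDerivAt (by linarith) hlt
    have hcomp := houter.comp θ hinner
    refine hcomp.congr_deriv ?_
    have hune : (1:ℝ) - (s * Real.tan (θ / 2)) ^ 2 ≠ 0 := by nlinarith
    have hcne : Real.cos (θ / 2) ≠ 0 := ne_of_gt hcos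
    have hid : (1 - (s * Real.tan (θ / 2)) ^ 2) * Real.cos (θ / 2) ^ 2
        = Real.cos (θ / 2) ^ 2 - s ^ 2 * Real.sin (θ / 2) ^ 2 := by
      rw [Real.tan_eq_sin_div_cos]
      field_simp
    have h5 : 1 / (1 - (s * Real.tan (θ / 2)) ^ 2) * (s * (1 / Real.cos (θ / 2) ^ 2 * 2⁻¹))
        = s / (2 * ((1 - (s * Real.tan (θ / 2)) ^ 2) * Real.cos (θ / 2) ^ 2)) := by
      field_simp
    rw [h5, hid]
  have hderiv : ∀ θ ∈ Set.Ioo (0:ℝ) c,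
      deriv (fun θ => _root_.artanh (s * Real.tan (θ / 2))) θ = s / (2 * g θ) :=
    fun θ hθ => (hF θ hθ).deriv
  apply strictConvexOn_of_deriv2_pos (convex_Ioo 0 c)
  · exact fun θ hθ => (hF θ hθ).continuousAt.continuousWithinAt
  · intro θ hθ
    rw [interior_Ioo] at hθ
    obtain ⟨hcos, hsin, hlt, htpos⟩ := key θ hθ
    have hgp := hgpos θ hθ
    have hEq : deriv (fun θ => _root_.artanh (s * Real.tan (θ / 2)))
        =ᶠ[nhds θ] fun θ => s / (2 * g θ) := by
      filter_upwards [isOpen_Ioo.mem_nhds hθ] with y hy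
      exact hderiv y hy
    -- derivative of g
    have hg' : HasDerivAt g (-(1 + s ^ 2) * (Real.sin (θ / 2) * Real.cos (θ / 2))) θ := by
      have h1 : HasDerivAt (fun θ : ℝ => θ / 2) (2⁻¹) θ := by
        simpa using (hasDerivAt_id θ).div_const 2
      have hc : HasDerivAt (fun θ : ℝ => Real.cos (θ / 2) ^ 2)
          (2 * Real.cos (θ / 2) * (-Real.sin (θ / 2) * 2⁻¹)) θ := by
        have := ((Real.hasDerivAt_cos (θ / 2)).comp θ h1).pow 2
        refine this.congr_deriv ?_
        simp only [Function.comp_apply]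
        push_cast
        ring
      have hsn : HasDerivAt (fun θ : ℝ => s ^ 2 * Real.sin (θ / 2) ^ 2)
          (s ^ 2 * (2 * Real.sin (θ / 2) * (Real.cos (θ / 2) * 2⁻¹))) θ := by
        have := (((Real.hasDerivAt_sin (θ / 2)).comp θ h1).pow 2).const_mul (s ^ 2)
        refine this.congr_deriv ?_
        simp only [Function.comp_apply]
        push_cast
        ring
      have := hc.sub hsn
      refine this.congr_deriv ?_
      ring
    have hG : HasDerivAt (fun θ => s / (2 * g θ))
        (s * (1 + s ^ 2) * (Real.sin (θ / 2) * Real.cos (θ / 2)) / (2 * (g θ) ^ 2)) θ := by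
      have h2g : HasDerivAt (fun θ => 2 * g θ)
          (2 * (-(1 + s ^ 2) * (Real.sin (θ / 2) * Real.cos (θ / 2)))) θ :=
        hg'.const_mul 2
      have := (hasDerivAt_const θ s).div h2g (by positivity)
      refine this.congr_deriv ?_
      have hgne : g θ ≠ 0 := ne_of_gt hgp
      field_simp
      ring
    have h2 : deriv^[2] (fun θ => _root_.artanh (s * Real.tan (θ / 2))) θ
        = s * (1 + s ^ 2) * (Real.sin (θ / 2) * Real.cos (θ / 2)) / (2 * (g θ) ^ 2) := by
      show deriv (deriv (fun θ => _root_.artanh (s * Real.tan (θ / 2)))) θ = _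
      rw [hEq.deriv_eq]
      exact hG.deriv
    rw [h2]
    positivity
end

section
/- For fixed R > 0, the function b(θ) = arsinh(sin(θ/2)·sinh(R)) is strictly concave on (0, π). -/
open Real

lemma aux_comp {g f : ℝ → ℝ} {s t : Set ℝ}
    (hg : ConcaveOn ℝ t g) (hg' : StrictMonoOn g t)
    (hf : StrictConcaveOn ℝ s f) (hmem : ∀ x ∈ s, f x ∈ t) :
    StrictConcaveOn ℝ s (fun x => g (f x)) := by
  refine ⟨hf.1, fun x hx y hy hxy a b ha hb hab => ?_⟩
  have h1 := hf.2 hx hy hxy ha hb hab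
  have m1 : a • f x + b • f y ∈ t := hg.1 (hmem x hx) (hmem y hy) ha.le hb.le hab
  have m2 : f (a • x + b • y) ∈ t := hmem _ (hf.1 hx hy ha.le hb.le hab)
  calc a • g (f x) + b • g (f y)
      ≤ g (a • f x + b • f y) := hg.2 (hmem x hx) (hmem y hy) ha.le hb.le hab
    _ < g (f (a • x + b • y)) := hg' m1 m2 h1

lemma arsinh_deriv_eq : deriv Real.arsinh = fun x => (Real.sqrt (1 + x ^ 2))⁻¹ := by
  funext x
  exact (Real.hasDerivAt_arsinh x).deriv

lemma arsinh_concave : ConcaveOn ℝ (Set.Ici (0 : ℝ)) Real.arsinh := by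
  have h : StrictAntiOn (deriv Real.arsinh) (interior (Set.Ici (0 : ℝ))) := by
    rw [arsinh_deriv_eq, interior_Ici]
    intro x hx y hy hxy
    have hx0 : (0 : ℝ) < x := hx
    have h1 : Real.sqrt (1 + x ^ 2) < Real.sqrt (1 + y ^ 2) := by
      apply Real.sqrt_lt_sqrt (by positivity)
      nlinarith
    have h2 : (0 : ℝ) < Real.sqrt (1 + x ^ 2) := Real.sqrt_pos.2 (by positivity)
    exact inv_strictAnti₀ h2 h1
  exact (StrictAntiOn.strictConcaveOn_of_deriv (convex_Ici 0)
    Real.continuous_arsinh.continuousOn h).concaveOn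

theorem stmt3 (R : ℝ) (hR : 0 < R) :
    StrictConcaveOn ℝ (Set.Ioo 0 π)
      (fun θ => Real.arsinh (Real.sin (θ / 2) * Real.sinh R)) := by
  have hs : (0 : ℝ) < Real.sinh R := Real.sinh_pos_iff.2 hR
  have hf : StrictConcaveOn ℝ (Set.Ioo 0 π) (fun θ => Real.sin (θ / 2) * Real.sinh R) := by
    refine ⟨convex_Ioo 0 π, fun x hx y hy hxy a b ha hb hab => ?_⟩
    have hx2 : x / 2 ∈ Set.Icc (0 : ℝ) π := ⟨by linarith [hx.1], by linarith [hx.2, Real.pi_pos]⟩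
    have hy2 : y / 2 ∈ Set.Icc (0 : ℝ) π := ⟨by linarith [hy.1], by linarith [hy.2, Real.pi_pos]⟩
    have hne : x / 2 ≠ y / 2 := fun h => hxy (by linarith)
    have := strictConcaveOn_sin_Icc.2 hx2 hy2 hne ha hb hab
    have heq : a • (x / 2) + b • (y / 2) = (a • x + b • y) / 2 := by
      simp [smul_eq_mul]; ring
    rw [heq] at this
    simp only [smul_eq_mul] at this ⊢
    nlinarith
  refine aux_comp arsinh_concave ?_ hf ?_
  · intro u _ v _ huv
    exact Real.arsinh_lt_arsinh.2 huv
  · intro x hx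
    have : 0 < Real.sin (x / 2) := Real.sin_pos_of_pos_of_lt_pi (by linarith [hx.1])
      (by linarith [hx.2, Real.pi_pos])
    exact Set.mem_Ici.2 (by positivity)
end

section
/- For fixed r > 0, the function φ(θ) = 2·arccos(sin(θ/2)·cosh(r)) is strictly concave on the set of θ ∈ (0, π) for which sin(θ/2)·cosh(r) < 1. -/
open Real

theorem stmt4 (r : ℝ) (hr : 0 < r) :
    StrictConcaveOn ℝ {θ : ℝ | θ ∈ Set.Ioo 0 π ∧ Real.sin (θ / 2) * Real.cosh r < 1}
      (fun θ => 2 * Real.arccos (Real.sin (θ / 2) * Real.cosh r)) := by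
  set c := Real.cosh r with hcdef
  have hc : 1 < c := by rw [hcdef]; exact Real.one_lt_cosh.2 hr.ne'
  have hc0 : 0 < c := lt_trans one_pos hc
  have hci1 : c⁻¹ < 1 := inv_lt_one_of_one_lt₀ hc
  have hci0 : 0 < c⁻¹ := inv_pos.2 hc0
  have harc : 0 < Real.arcsin c⁻¹ := Real.arcsin_pos.2 hci0
  have harc2 : Real.arcsin c⁻¹ < π / 2 := Real.arcsin_lt_pi_div_two.2 hci1
  set a := 2 * Real.arcsin c⁻¹ with hadef
  have ha0 : 0 < a := by positivity
  have haπ : a < π := by rw [hadef]; linarith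
  -- set equality
  have hset : {θ : ℝ | θ ∈ Set.Ioo 0 π ∧ Real.sin (θ / 2) * c < 1} = Set.Ioo 0 a := by
    ext θ
    simp only [Set.mem_setOf_eq, Set.mem_Ioo]
    constructor
    · rintro ⟨⟨h1, h2⟩, h3⟩
      refine ⟨h1, ?_⟩
      have hs : Real.sin (θ / 2) < c⁻¹ := by
        rw [← one_div, lt_div_iff₀ hc0]
        exact h3
      have h4 : θ / 2 < Real.arcsin c⁻¹ := by
        rw [Real.lt_arcsin_iff_sin_lt' ⟨by linarith [Real.pi_pos], by linarith⟩]
        exact hs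
      linarith
    · rintro ⟨h1, h2⟩
      have hθπ : θ < π := lt_trans h2 haπ
      refine ⟨⟨h1, hθπ⟩, ?_⟩
      have h4 : θ / 2 < Real.arcsin c⁻¹ := by rw [hadef] at h2; linarith
      have hs : Real.sin (θ / 2) < c⁻¹ := by
        rwa [Real.lt_arcsin_iff_sin_lt' ⟨by linarith [Real.pi_pos], by linarith⟩] at h4
      calc Real.sin (θ / 2) * c < c⁻¹ * c := by
            exact mul_lt_mul_of_pos_right hs hc0
        _ = 1 := inv_mul_cancel₀ hc0.ne'
  rw [hset]
  -- pointwise facts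
  have hfacts : ∀ θ ∈ Set.Ioo 0 a, 0 < Real.sin (θ / 2) ∧ 0 < Real.cos (θ / 2) ∧
      Real.sin (θ / 2) * c < 1 := by
    intro θ hθ
    have hθ' : θ ∈ {θ : ℝ | θ ∈ Set.Ioo 0 π ∧ Real.sin (θ / 2) * c < 1} := by
      rw [hset]; exact hθ
    obtain ⟨⟨h1, h2⟩, h3⟩ := hθ'
    refine ⟨Real.sin_pos_of_pos_of_lt_pi (by linarith) (by linarith [Real.pi_pos]), ?_, h3⟩
    exact Real.cos_pos_of_mem_Ioo ⟨by linarith [Real.pi_pos], by linarith⟩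
  set F : ℝ → ℝ := fun θ => -(c * Real.cos (θ / 2)) / Real.sqrt (1 - (Real.sin (θ / 2) * c) ^ 2)
    with hFdef
  have hg : ∀ θ : ℝ, HasDerivAt (fun θ => Real.sin (θ / 2) * c)
      (Real.cos (θ / 2) * (1 / 2) * c) θ := by
    intro θ
    have hhalf : HasDerivAt (fun θ : ℝ => θ / 2) (1 / 2) θ := by
      simpa using (hasDerivAt_id θ).div_const 2
    exact ((Real.hasDerivAt_sin (θ / 2)).comp θ hhalf).mul_const c
  have hf' : ∀ θ ∈ Set.Ioo 0 a, HasDerivAt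
      (fun θ => 2 * Real.arccos (Real.sin (θ / 2) * c)) (F θ) θ := by
    intro θ hθ
    obtain ⟨hs, hu, hx1⟩ := hfacts θ hθ
    have hx0 : 0 < Real.sin (θ / 2) * c := by positivity
    have hne1 : Real.sin (θ / 2) * c ≠ -1 := by linarith
    have hne2 : Real.sin (θ / 2) * c ≠ 1 := ne_of_lt hx1
    have hpos : 0 < 1 - (Real.sin (θ / 2) * c) ^ 2 := by nlinarith
    have hD : 0 < Real.sqrt (1 - (Real.sin (θ / 2) * c) ^ 2) := Real.sqrt_pos.2 hpos
    have h := ((Real.hasDerivAt_arccos hne1 hne2).comp θ (hg θ)).const_mul 2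
    refine h.congr_deriv ?_
    symm
    rw [hFdef]
    field_simp
  have hF' : ∀ θ ∈ Set.Ioo 0 a, HasDerivAt F
      (c * Real.sin (θ / 2) / 2 * (1 - c ^ 2) /
        Real.sqrt (1 - (Real.sin (θ / 2) * c) ^ 2) ^ 3) θ := by
    intro θ hθ
    obtain ⟨hs, hu, hx1⟩ := hfacts θ hθ
    have hx0 : 0 < Real.sin (θ / 2) * c := by positivity
    have hpos : 0 < 1 - (Real.sin (θ / 2) * c) ^ 2 := by nlinarith
    have hD : 0 < Real.sqrt (1 - (Real.sin (θ / 2) * c) ^ 2) := Real.sqrt_pos.2 hpos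
    have hDsq : Real.sqrt (1 - (Real.sin (θ / 2) * c) ^ 2) ^ 2
        = 1 - (Real.sin (θ / 2) * c) ^ 2 := Real.sq_sqrt hpos.le
    have hhalf : HasDerivAt (fun θ : ℝ => θ / 2) (1 / 2) θ := by
      simpa using (hasDerivAt_id θ).div_const 2
    have hN : HasDerivAt (fun θ : ℝ => -(c * Real.cos (θ / 2)))
        (-(c * (-Real.sin (θ / 2) * (1 / 2)))) θ := by
      have := ((Real.hasDerivAt_cos (θ / 2)).comp θ hhalf).const_mul c
      exact this.neg
    have hinner : HasDerivAt (fun θ : ℝ => 1 - (Real.sin (θ / 2) * c) ^ 2)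
        (-((2 : ℕ) * (Real.sin (θ / 2) * c) ^ 1 * (Real.cos (θ / 2) * (1 / 2) * c))) θ :=
      ((hg θ).pow 2).const_sub 1
    have hDd := hinner.sqrt hpos.ne'
    have h := hN.div hDd hD.ne'
    refine h.congr_deriv ?_
    symm
    set D := Real.sqrt (1 - (Real.sin (θ / 2) * c) ^ 2) with hDdef
    rw [div_eq_div_iff (by positivity) (by positivity)]
    field_simp
    linear_combination (8 * c * Real.sin (θ / 2) * D *
        (Real.cos (θ / 2) ^ 2 * c ^ 2 - D ^ 2 -
          (1 - (Real.sin (θ / 2) * c) ^ 2))) * hDsq +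
      (8 * c * Real.sin (θ / 2) * D *
        (1 - (Real.sin (θ / 2) * c) ^ 2) * c ^ 2) * Real.sin_sq_add_cos_sq (θ / 2) +
      (-2 + 8 * c * Real.sin (θ / 2) * D * (D ^ 2 + (1 - (Real.sin (θ / 2) * c) ^ 2) -
        c ^ 2 * Real.cos (θ / 2) ^ 2)) * hDsq +
      (2 * c ^ 2 - 8 * c * Real.sin (θ / 2) * D * c ^ 2 * (1 - (Real.sin (θ / 2) * c) ^ 2)) *
        Real.sin_sq_add_cos_sq (θ / 2)
  apply strictConcaveOn_of_deriv2_neg (convex_Ioo 0 a)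
  · exact (continuous_const.mul (Real.continuous_arccos.comp
      ((Real.continuous_sin.comp (continuous_id.div_const 2)).mul continuous_const))).continuousOn
  · intro x hx
    rw [interior_Ioo] at hx
    obtain ⟨hs, hu, hx1⟩ := hfacts x hx
    have hx0 : 0 < Real.sin (x / 2) * c := by positivity
    have hpos : 0 < 1 - (Real.sin (x / 2) * c) ^ 2 := by nlinarith
    have hD : 0 < Real.sqrt (1 - (Real.sin (x / 2) * c) ^ 2) := Real.sqrt_pos.2 hpos
    have hEq : deriv (fun θ => 2 * Real.arccos (Real.sin (θ / 2) * c)) =ᶠ[nhds x] F :=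
      Filter.eventuallyEq_of_mem (Ioo_mem_nhds hx.1 hx.2) fun y hy => (hf' y hy).deriv
    have : deriv^[2] (fun θ => 2 * Real.arccos (Real.sin (θ / 2) * c)) x
        = c * Real.sin (x / 2) / 2 * (1 - c ^ 2) /
          Real.sqrt (1 - (Real.sin (x / 2) * c) ^ 2) ^ 3 := by
      show deriv (deriv _) x = _
      rw [hEq.deriv_eq, (hF' x hx).deriv]
    rw [this]
    apply div_neg_of_neg_of_pos
    · have h1 : 1 - c ^ 2 < 0 := by nlinarith
      exact mul_neg_of_pos_of_neg (by positivity) h1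
    · positivity
end

section
/- Fix an integer n ≥ 3 and a real r > 0 with tan(π/n)·sinh(r) < 1. If θ₁, …, θ_n ∈ (0, π) satisfy θ₁ + ⋯ + θ_n = 2π and sinh(r)·tan(θᵢ/2) < 1 for each i, then ∑ᵢ 2·artanh(sinh(r)·tan(θᵢ/2)) ≥ 2n·artanh(tan(π/n)·sinh(r)), with equality iff all θᵢ = 2π/n. (This is the perimeter inequality for tangential hyperbolic n-gons of inradius r.) -/
open Real

lemma hasDerivAt_f (s : ℝ) (θ : ℝ) (h1 : -(π/2) < θ/2) (h2 : θ/2 < π/2)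
    (hlt : s * Real.tan (θ/2) < 1) (hgt : -1 < s * Real.tan (θ/2)) :
    HasDerivAt (fun x => 2 * _root_.artanh (s * Real.tan (x/2)))
      (s * (1 + Real.tan (θ/2)^2) / (1 - s^2 * Real.tan (θ/2)^2)) θ := by
  have hcos : Real.cos (θ/2) ≠ 0 := (Real.cos_pos_of_mem_Ioo ⟨h1, h2⟩).ne'
  set t := Real.tan (θ/2) with ht
  have hc2 : (1 : ℝ) / Real.cos (θ/2)^2 = 1 + t^2 := by
    rw [one_div, ← Real.inv_one_add_tan_sq hcos, inv_inv]
  have htan : HasDerivAt (fun x : ℝ => Real.tan (x/2)) ((1 + t^2) * (1/2)) θ := by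
    have := (Real.hasDerivAt_tan hcos).comp θ ((hasDerivAt_id θ).div_const 2)
    simpa [hc2, Function.comp_def] using this
  have hu : HasDerivAt (fun x : ℝ => s * Real.tan (x/2)) (s * ((1 + t^2) * (1/2))) θ :=
    htan.const_mul s
  have hp : HasDerivAt (fun x : ℝ => 1 + s * Real.tan (x/2)) (s * ((1 + t^2) * (1/2))) θ :=
    hu.const_add 1
  have hm : HasDerivAt (fun x : ℝ => 1 - s * Real.tan (x/2)) (-(s * ((1 + t^2) * (1/2)))) θ := by
    simpa using hu.const_sub 1
  have hppos : (0:ℝ) < 1 + s * t := by linarith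
  have hmpos : (0:ℝ) < 1 - s * t := by linarith
  have hl1 : HasDerivAt (fun x : ℝ => Real.log (1 + s * Real.tan (x/2)))
      ((s * ((1 + t^2) * (1/2))) / (1 + s * t)) θ := hp.log hppos.ne'
  have hl2 : HasDerivAt (fun x : ℝ => Real.log (1 - s * Real.tan (x/2)))
      ((-(s * ((1 + t^2) * (1/2)))) / (1 - s * t)) θ := hm.log hmpos.ne'
  have hsum := hl1.sub hl2
  have hev : (fun x => 2 * _root_.artanh (s * Real.tan (x/2))) =ᶠ[nhds θ]
      (fun x : ℝ => Real.log (1 + s * Real.tan (x/2)) - Real.log (1 - s * Real.tan (x/2))) := by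
    have hc : ContinuousAt (fun x : ℝ => s * Real.tan (x/2)) θ := hu.continuousAt
    have h1' : ∀ᶠ x in nhds θ, s * Real.tan (x/2) < 1 := hc.eventually_lt continuousAt_const hlt
    have h2' : ∀ᶠ x in nhds θ, -1 < s * Real.tan (x/2) :=
      (continuousAt_const (y := (-1:ℝ))).eventually_lt hc hgt
    filter_upwards [h1', h2'] with x hx1 hx2
    unfold _root_.artanh
    rw [Real.log_div (by linarith) (by linarith)]
    ring
  have hfinal := hsum.congr_of_eventuallyEq hev
  refine hfinal.congr_deriv ?_
  have hne : (1 : ℝ) - s^2 * t^2 ≠ 0 := by nlinarith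
  field_simp [hppos.ne', hmpos.ne']
  ring

theorem stmt6 (n : ℕ) (hn : 3 ≤ n) (r : ℝ) (hr : 0 < r)
    (hreg : Real.tan (π / n) * Real.sinh r < 1)
    (θ : Fin n → ℝ) (hθ : ∀ i, θ i ∈ Set.Ioo 0 π)
    (hsum : ∑ i, θ i = 2 * π)
    (hlt : ∀ i, Real.sinh r * Real.tan (θ i / 2) < 1) :
    ∑ i, 2 * _root_.artanh (Real.sinh r * Real.tan (θ i / 2))
      ≥ 2 * n * _root_.artanh (Real.tan (π / n) * Real.sinh r) ∧
    (∑ i, 2 * _root_.artanh (Real.sinh r * Real.tan (θ i / 2))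
      = 2 * n * _root_.artanh (Real.tan (π / n) * Real.sinh r) ↔ ∀ i, θ i = 2 * π / n) := by
  have hπ := Real.pi_pos
  set s := Real.sinh r with hsdef
  have hs : 0 < s := by rw [hsdef]; exact Real.sinh_pos_iff.mpr hr
  set A := 2 * Real.arctan s⁻¹ with hAdef
  set D := Set.Ioo (0:ℝ) A with hDdef
  have harc : 0 < Real.arctan s⁻¹ := by
    simpa using Real.arctan_strictMono (inv_pos.mpr hs)
  have hAπ : A < π := by have := Real.arctan_lt_pi_div_two s⁻¹; rw [hAdef]; linarith
  -- membership criterion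
  have hmemD : ∀ x : ℝ, x ∈ Set.Ioo 0 π → s * Real.tan (x/2) < 1 → x ∈ D := by
    intro x hx hxs
    have hx2 : 0 < x/2 := by have := hx.1; linarith
    have hx2' : x/2 < π/2 := by have := hx.2; linarith
    have htp : 0 < Real.tan (x/2) := Real.tan_pos_of_pos_of_lt_pi_div_two hx2 hx2'
    have hts : Real.tan (x/2) < s⁻¹ := by
      rw [← one_div]
      rw [lt_div_iff₀ hs]
      linarith [mul_comm s (Real.tan (x/2))]
    have : x/2 < Real.arctan s⁻¹ := by
      calc x/2 = Real.arctan (Real.tan (x/2)) := (Real.arctan_tan (by linarith) hx2').symm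
        _ < Real.arctan s⁻¹ := Real.arctan_strictMono hts
    simp only [hDdef, Set.mem_Ioo, hAdef]
    exact ⟨hx.1, by linarith⟩
  -- properties of elements of D
  have hDprop : ∀ x ∈ D, 0 < Real.tan (x/2) ∧ s * Real.tan (x/2) < 1 ∧
      0 < x/2 ∧ x/2 < π/2 := by
    intro x hx
    simp only [hDdef, Set.mem_Ioo, hAdef] at hx
    have hx2 : 0 < x/2 := by linarith [hx.1]
    have hx2A : x/2 < Real.arctan s⁻¹ := by linarith [hx.2]
    have hx2' : x/2 < π/2 := hx2A.trans (Real.arctan_lt_pi_div_two s⁻¹)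
    have htp : 0 < Real.tan (x/2) := Real.tan_pos_of_pos_of_lt_pi_div_two hx2 hx2'
    have hts : Real.tan (x/2) < s⁻¹ := by
      have := Real.tan_lt_tan_of_nonneg_of_lt_pi_div_two hx2.le
        (Real.arctan_lt_pi_div_two s⁻¹) hx2A
      rwa [Real.tan_arctan] at this
    have : s * Real.tan (x/2) < 1 := by
      have := (mul_lt_mul_of_pos_left hts hs)
      rwa [mul_inv_cancel₀ hs.ne'] at this
    exact ⟨htp, this, hx2, hx2'⟩
  set f : ℝ → ℝ := fun x => 2 * _root_.artanh (s * Real.tan (x/2)) with hfdef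
  set F : ℝ → ℝ := fun x => s * (1 + Real.tan (x/2)^2) / (1 - s^2 * Real.tan (x/2)^2) with hFdef
  have hderiv : ∀ x ∈ D, HasDerivAt f (F x) x := by
    intro x hx
    obtain ⟨htp, hts, hx2, hx2'⟩ := hDprop x hx
    exact hasDerivAt_f s x (by linarith) hx2' hts (by nlinarith)
  have hconv : StrictConvexOn ℝ D f := by
    apply StrictMonoOn.strictConvexOn_of_deriv (convex_Ioo _ _)
    · exact fun x hx => (hderiv x hx).continuousAt.continuousWithinAt
    · rw [interior_Ioo]
      intro a ha b hb hab
      rw [(hderiv a ha).deriv, (hderiv b hb).deriv, hFdef]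
      obtain ⟨hta, hsa, ha2, ha2'⟩ := hDprop a ha
      obtain ⟨htb, hsb, hb2, hb2'⟩ := hDprop b hb
      have htab : Real.tan (a/2) < Real.tan (b/2) :=
        Real.tan_lt_tan_of_nonneg_of_lt_pi_div_two ha2.le hb2' (by linarith)
      set ta := Real.tan (a/2)
      set tb := Real.tan (b/2)
      have hda : (0:ℝ) < 1 - s^2 * ta^2 := by
        nlinarith [mul_pos (sub_pos.mpr hsa) (show (0:ℝ) < 1 + s*ta by positivity)]
      have hdb : (0:ℝ) < 1 - s^2 * tb^2 := by
        nlinarith [mul_pos (sub_pos.mpr hsb) (show (0:ℝ) < 1 + s*tb by positivity)]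
      rw [div_lt_div_iff₀ hda hdb]
      nlinarith [mul_pos (mul_pos hs (sub_pos.mpr htab)) (show (0:ℝ) < ta + tb by linarith),
        mul_nonneg (mul_nonneg (mul_pos hs (sub_pos.mpr htab)).le
          (show (0:ℝ) ≤ ta + tb by linarith)) (sq_nonneg s)]
  -- the center point
  have hn0 : (0:ℝ) < (n:ℝ) := by positivity
  have hn2 : (2:ℝ) < (n:ℝ) := by exact_mod_cast by omega
  set c : ℝ := 2 * π / n with hcdef
  have hc2 : c/2 = π / n := by rw [hcdef]; ring
  have hcD : c ∈ D := by
    apply hmemD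
    · constructor
      · rw [hcdef]; positivity
      · rw [hcdef, div_lt_iff₀ hn0]; nlinarith
    · rw [hc2, mul_comm]; exact hreg
  -- Jensen setup
  set w : Fin n → ℝ := fun _ => (n:ℝ)⁻¹ with hwdef
  have h₀ : ∀ i ∈ Finset.univ, 0 < w (i : Fin n) := fun i _ => inv_pos.mpr hn0
  have h₁ : ∑ i : Fin n, w i = 1 := by
    simp [hwdef, Finset.card_univ]
    have : (n:ℝ) ≠ 0 := by positivity
    field_simp
  have hmem : ∀ i ∈ Finset.univ, θ (i : Fin n) ∈ D := fun i _ => hmemD _ (hθ i) (hlt i)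
  have hcenter : ∑ i : Fin n, w i • θ i = c := by
    simp only [hwdef, smul_eq_mul, ← Finset.mul_sum, hsum, hcdef]
    ring
  have hfθ : ∀ i : Fin n, w i • f (θ i) = (n:ℝ)⁻¹ * f (θ i) := fun i => rfl
  have hsumf : ∑ i : Fin n, w i • f (θ i) = (n:ℝ)⁻¹ * ∑ i, f (θ i) := by
    rw [Finset.mul_sum]; rfl
  have hfc : f c = 2 * _root_.artanh (Real.tan (π / n) * s) := by
    rw [hfdef]; simp only; rw [hc2, mul_comm s (Real.tan (π / (n:ℝ)))]
  -- the inequality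
  have hineq := hconv.convexOn.map_sum_le (fun i _ => (h₀ i (Finset.mem_univ i)).le) h₁ hmem
  rw [hcenter, hsumf] at hineq
  have hkey : 2 * (n:ℝ) * _root_.artanh (Real.tan (π / n) * s) = (n:ℝ) * f c := by
    rw [hfc]; ring
  have hrw : (∑ i, 2 * _root_.artanh (s * Real.tan (θ i / 2))) = ∑ i, f (θ i) := rfl
  rw [hrw, hkey]
  have hnne : (n:ℝ) ≠ 0 := hn0.ne'
  have hiff := hconv.map_sum_eq_iff h₀ h₁ hmem
  rw [hcenter, hsumf] at hiff
  constructor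
  · rw [ge_iff_le]
    calc (n:ℝ) * f c ≤ (n:ℝ) * ((n:ℝ)⁻¹ * ∑ i, f (θ i)) :=
          mul_le_mul_of_nonneg_left hineq hn0.le
      _ = ∑ i, f (θ i) := by field_simp
  · constructor
    · intro h i
      have hfc' : f c = (n:ℝ)⁻¹ * ∑ i, f (θ i) := by rw [h]; field_simp
      exact hiff.mp hfc' i (Finset.mem_univ i)
    · intro h
      have hfc' : f c = (n:ℝ)⁻¹ * ∑ i, f (θ i) := hiff.mpr (fun j _ => h j)
      rw [hfc']
      field_simp
end

section
/- Fix an integer n ≥ 3 and a real R > 0. If θ₁, …, θ_n ∈ (0, π) satisfy θ₁ + ⋯ + θ_n = 2π, then ∑ᵢ 2·arsinh(sin(θᵢ/2)·sinh(R)) ≤ 2n·arsinh(sin(π/n)·sinh(R)), with equality iff all θᵢ = 2π/n. (This is the perimeter inequality for centered cyclic hyperbolic n-gons of circumradius R.) -/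
open Real

/-- Composition of a concave strictly monotone function with a strictly concave one. -/
lemma my_comp_concave {g f : ℝ → ℝ} {s T : Set ℝ} (hg : ConcaveOn ℝ T g)
    (hgm : StrictMonoOn g T) (hf : StrictConcaveOn ℝ s f) (hmap : ∀ x ∈ s, f x ∈ T) :
    StrictConcaveOn ℝ s (fun x => g (f x)) := by
  refine ⟨hf.1, fun x hx y hy hxy a b ha hb hab => ?_⟩
  have h1 : a • f x + b • f y < f (a • x + b • y) := hf.2 hx hy hxy ha hb hab
  have hTx := hmap x hx
  have hTy := hmap y hy
  have hTc : a • f x + b • f y ∈ T := hg.1 hTx hTy ha.le hb.le hab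
  have hTm : f (a • x + b • y) ∈ T := hmap _ (hf.1 hx hy ha.le hb.le hab)
  calc a • g (f x) + b • g (f y) ≤ g (a • f x + b • f y) := hg.2 hTx hTy ha.le hb.le hab
    _ < g (f (a • x + b • y)) := hgm hTc hTm h1

lemma my_sin_half : StrictConcaveOn ℝ (Set.Icc 0 π) (fun x => Real.sin (x / 2)) := by
  refine ⟨convex_Icc _ _, fun x hx y hy hxy a b ha hb hab => ?_⟩
  have hpi := Real.pi_pos
  have hx2 : x / 2 ∈ Set.Icc 0 π := ⟨by linarith [hx.1], by linarith [hx.2]⟩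
  have hy2 : y / 2 ∈ Set.Icc 0 π := ⟨by linarith [hy.1], by linarith [hy.2]⟩
  have hxy2 : x / 2 ≠ y / 2 := fun h => hxy (by linarith)
  have h := strictConcaveOn_sin_Icc.2 hx2 hy2 hxy2 ha hb hab
  have e : a • (x / 2) + b • (y / 2) = (a • x + b • y) / 2 := by
    simp only [smul_eq_mul]; ring
  rwa [e] at h

lemma my_arsinh_mul_concave {s : ℝ} (hs : 0 < s) :
    ConcaveOn ℝ (Set.Ici 0) (fun t => Real.arsinh (t * s)) := by
  have hder : ∀ t : ℝ, HasDerivAt (fun t => Real.arsinh (t * s))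
      (s / Real.sqrt (1 + (t * s) ^ 2)) t := by
    intro t
    have h1 : HasDerivAt (fun t : ℝ => t * s) s t := by
      simpa using (hasDerivAt_id t).mul_const s
    have h2 := (Real.hasDerivAt_arsinh (t * s)).comp t h1
    rw [div_eq_mul_inv, mul_comm s]
    exact h2
  have hderiv : ∀ t : ℝ, deriv (fun t => Real.arsinh (t * s)) t
      = s / Real.sqrt (1 + (t * s) ^ 2) := fun t => (hder t).deriv
  apply AntitoneOn.concaveOn_of_deriv (convex_Ici 0)
  · exact (Real.continuous_arsinh.comp (continuous_id.mul continuous_const)).continuousOn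
  · exact fun t _ => (hder t).differentiableAt.differentiableWithinAt
  · intro x hx y hy hxy
    rw [interior_Ici] at hx hy
    rw [hderiv, hderiv]
    have hx0 : (0:ℝ) < x := hx
    have h1 : (0:ℝ) < Real.sqrt (1 + (x * s) ^ 2) := Real.sqrt_pos.2 (by positivity)
    have h2 : Real.sqrt (1 + (x * s) ^ 2) ≤ Real.sqrt (1 + (y * s) ^ 2) := by
      apply Real.sqrt_le_sqrt
      nlinarith [mul_nonneg hx0.le hs.le, mul_le_mul_of_nonneg_right hxy hs.le]
    exact div_le_div_of_nonneg_left hs.le h1 h2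

lemma my_arsinh_mul_strictMono {s : ℝ} (hs : 0 < s) :
    StrictMono (fun t => Real.arsinh (t * s)) := fun a b hab =>
  Real.arsinh_lt_arsinh.2 (mul_lt_mul_of_pos_right hab hs)

theorem stmt7 (n : ℕ) (hn : 3 ≤ n) (R : ℝ) (hR : 0 < R)
    (θ : Fin n → ℝ) (hθ : ∀ i, θ i ∈ Set.Ioo 0 π)
    (hsum : ∑ i, θ i = 2 * π) :
    ∑ i, 2 * Real.arsinh (Real.sin (θ i / 2) * Real.sinh R)
      ≤ 2 * n * Real.arsinh (Real.sin (π / n) * Real.sinh R) ∧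
    (∑ i, 2 * Real.arsinh (Real.sin (θ i / 2) * Real.sinh R)
      = 2 * n * Real.arsinh (Real.sin (π / n) * Real.sinh R) ↔ ∀ i, θ i = 2 * π / n) := by
  have hpi := Real.pi_pos
  have hs : 0 < Real.sinh R := Real.sinh_pos_iff.2 hR
  set s := Real.sinh R with hsdef
  set F : ℝ → ℝ := fun x => Real.arsinh (Real.sin (x / 2) * s) with hFdef
  have hF : StrictConcaveOn ℝ (Set.Icc 0 π) F := by
    apply my_comp_concave (my_arsinh_mul_concave hs) ((my_arsinh_mul_strictMono hs).strictMonoOn _)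
      my_sin_half
    intro x hx
    exact Real.sin_nonneg_of_nonneg_of_le_pi (by linarith [hx.1]) (by linarith [hx.2])
  have hn0 : (0:ℝ) < (n:ℝ) := by positivity
  set w : Fin n → ℝ := fun _ => (n:ℝ)⁻¹ with hwdef
  have h₁ : ∑ i : Fin n, w i = 1 := by
    simp [hwdef, Finset.sum_const, Finset.card_univ]
    field_simp
  have hmem : ∀ i ∈ Finset.univ, θ i ∈ Set.Icc 0 π :=
    fun i _ => ⟨(hθ i).1.le, (hθ i).2.le⟩
  have hcenter : ∑ i : Fin n, w i • θ i = 2 * π / (n:ℝ) := by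
    simp only [hwdef, smul_eq_mul, ← Finset.mul_sum, hsum]
    ring
  have hFc : F (2 * π / (n:ℝ)) = Real.arsinh (Real.sin (π / (n:ℝ)) * s) := by
    have : 2 * π / (n:ℝ) / 2 = π / (n:ℝ) := by ring
    rw [hFdef]; simp only [this]
  have hpos : ∀ i ∈ Finset.univ, (0:ℝ) < w i := fun i _ => by positivity
  have hJ : ∑ i : Fin n, w i • F (θ i) ≤ F (∑ i : Fin n, w i • θ i) :=
    hF.concaveOn.le_map_sum (fun i hi => (hpos i hi).le) h₁ hmem
  rw [hcenter, hFc] at hJ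
  have hsumw : ∑ i : Fin n, w i • F (θ i) = (n:ℝ)⁻¹ * ∑ i : Fin n, F (θ i) := by
    simp [hwdef, smul_eq_mul, Finset.mul_sum]
  have hsum2 : ∑ i : Fin n, 2 * Real.arsinh (Real.sin (θ i / 2) * s)
      = 2 * ∑ i : Fin n, F (θ i) := by
    rw [Finset.mul_sum]
  rw [hsumw] at hJ
  have hineq : ∑ i : Fin n, 2 * Real.arsinh (Real.sin (θ i / 2) * s)
      ≤ 2 * n * Real.arsinh (Real.sin (π / (n:ℝ)) * s) := by
    rw [hsum2]
    have := mul_le_mul_of_nonneg_left hJ (by positivity : (0:ℝ) ≤ 2 * n)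
    calc 2 * ∑ i : Fin n, F (θ i)
        = 2 * (n:ℝ) * ((n:ℝ)⁻¹ * ∑ i : Fin n, F (θ i)) := by
          field_simp
      _ ≤ 2 * n * Real.arsinh (Real.sin (π / (n:ℝ)) * s) := this
  refine ⟨hineq, ?_, ?_⟩
  · -- equality → all θ i = 2π/n
    intro heq
    have e1 : ∑ i : Fin n, w i • F (θ i) = (n:ℝ)⁻¹ * ∑ i : Fin n, F (θ i) := by
      simp [hwdef, smul_eq_mul, Finset.mul_sum]
    rw [hsum2] at heq
    have h3 : ∑ i : Fin n, F (θ i) = (n:ℝ) * Real.arsinh (Real.sin (π / (n:ℝ)) * s) := by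
      linarith
    have key : (n:ℝ)⁻¹ * ∑ i : Fin n, F (θ i)
        = Real.arsinh (Real.sin (π / (n:ℝ)) * s) := by
      rw [h3, ← mul_assoc, inv_mul_cancel₀ hn0.ne', one_mul]
    have hall : ∀ ⦃j⦄, j ∈ (Finset.univ : Finset (Fin n)) → ∀ ⦃k⦄, k ∈ Finset.univ →
        θ j = θ k := by
      apply hF.eq_of_map_sum_eq hpos h₁ hmem
      rw [hcenter, hFc, e1, key]
    intro i
    have hsc : ∑ j : Fin n, θ j = ∑ j : Fin n, θ i :=
      Finset.sum_congr rfl fun j hj => hall hj (Finset.mem_univ i)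
    rw [hsum] at hsc
    simp only [Finset.sum_const, Finset.card_univ, Fintype.card_fin, nsmul_eq_mul] at hsc
    rw [eq_div_iff hn0.ne']
    linarith
  · -- all θ i = 2π/n → equality
    intro hall
    have : ∀ i : Fin n, 2 * Real.arsinh (Real.sin (θ i / 2) * s)
        = 2 * Real.arsinh (Real.sin (π / (n:ℝ)) * s) := by
      intro i
      rw [hall i, show 2 * π / (n:ℝ) / 2 = π / (n:ℝ) from by ring]
    rw [Finset.sum_congr rfl (fun i _ => this i), Finset.sum_const, Finset.card_univ,
      Fintype.card_fin, nsmul_eq_mul]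
    ring
end

section
/- Fix an integer n ≥ 3 and a real r > 0 with sin(π/n)·cosh(r) < 1. If θ₁, …, θ_n ∈ (0, π) satisfy θ₁ + ⋯ + θ_n = 2π and sin(θᵢ/2)·cosh(r) < 1 for each i, then (n−2)π − ∑ᵢ 2·arccos(sin(θᵢ/2)·cosh(r)) ≥ (n−2)π − 2n·arccos(sin(π/n)·cosh(r)), equivalently ∑ᵢ arccos(sin(θᵢ/2)·cosh(r)) ≤ n·arccos(sin(π/n)·cosh(r)), with equality iff all θᵢ = 2π/n. (This is the area inequality for tangential hyperbolic n-gons of inradius r via Gauss–Bonnet.) -/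
open Real

section aux

variable {c : ℝ}

lemma sin_half_mem (hc : 1 < c) {x : ℝ} (hx : x ∈ Set.Ioo 0 (2 * Real.arcsin (1/c))) :
    0 < Real.sin (x/2) ∧ Real.sin (x/2) * c < 1 := by
  have h1 : (0:ℝ) < 1/c := by positivity
  have h2 : (1:ℝ)/c < 1 := by rw [div_lt_one (by linarith)]; linarith
  have ha1 : 0 < Real.arcsin (1/c) := Real.arcsin_pos.2 h1
  have ha2 : Real.arcsin (1/c) < π/2 := Real.arcsin_lt_pi_div_two.2 h2
  obtain ⟨hx0, hxb⟩ := hx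
  have hx2 : x/2 < Real.arcsin (1/c) := by linarith
  have hxpos : 0 < x/2 := by linarith
  have hs : Real.sin (x/2) < Real.sin (Real.arcsin (1/c)) := by
    apply Real.strictMonoOn_sin ⟨by linarith [Real.pi_pos], by linarith⟩
      ⟨by linarith [Real.pi_pos], by linarith⟩ hx2
  rw [Real.sin_arcsin (by linarith) (by linarith)] at hs
  constructor
  · exact Real.sin_pos_of_pos_of_lt_pi hxpos (by linarith [Real.pi_gt_three])
  · calc Real.sin (x/2) * c < (1/c) * c := by
          apply mul_lt_mul_of_pos_right hs; linarith
      _ = 1 := by field_simp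

lemma mem_of_lt (hc : 1 < c) {x : ℝ} (hx0 : 0 < x) (hxpi : x < π)
    (hlt : Real.sin (x/2) * c < 1) : x ∈ Set.Ioo 0 (2 * Real.arcsin (1/c)) := by
  refine ⟨hx0, ?_⟩
  by_contra h
  push_neg at h
  have h1 : (0:ℝ) < 1/c := by positivity
  have h2 : (1:ℝ)/c < 1 := by rw [div_lt_one (by linarith)]; linarith
  have ha2 : Real.arcsin (1/c) < π/2 := Real.arcsin_lt_pi_div_two.2 h2
  have ha1 : 0 < Real.arcsin (1/c) := Real.arcsin_pos.2 h1
  have hs : Real.sin (Real.arcsin (1/c)) ≤ Real.sin (x/2) := by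
    apply Real.strictMonoOn_sin.monotoneOn ⟨by linarith [Real.pi_pos], by linarith⟩
      ⟨by linarith, by linarith⟩ (by linarith)
  rw [Real.sin_arcsin (by linarith) (by linarith)] at hs
  have : 1 ≤ Real.sin (x/2) * c := by
    calc (1:ℝ) = (1/c) * c := by field_simp
      _ ≤ Real.sin (x/2) * c := by apply mul_le_mul_of_nonneg_right hs; linarith
  linarith

lemma hasDerivAt_f_s8 (hc : 1 < c) {x : ℝ} (hx : x ∈ Set.Ioo 0 (2 * Real.arcsin (1/c))) :
    HasDerivAt (fun y => Real.arccos (Real.sin (y/2) * c))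
      (-(1 / Real.sqrt (1 - (Real.sin (x/2) * c)^2)) * (Real.cos (x/2) * (1/2) * c)) x := by
  obtain ⟨hs0, hs1⟩ := sin_half_mem hc hx
  have hne1 : Real.sin (x/2) * c ≠ -1 := by nlinarith
  have hne2 : Real.sin (x/2) * c ≠ 1 := ne_of_lt hs1
  have hg : HasDerivAt (fun y => Real.sin (y/2) * c) (Real.cos (x/2) * (1/2) * c) x := by
    have h1 : HasDerivAt (fun y : ℝ => y/2) (1/2) x := by
      simpa using (hasDerivAt_id x).div_const 2
    exact ((Real.hasDerivAt_sin (x/2)).comp x h1).mul_const c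
  have hcomp := (Real.hasDerivAt_arccos hne1 hne2).comp x hg
  exact hcomp

set_option maxHeartbeats 1000000 in
lemma strictConcave_f (hc : 1 < c) :
    StrictConcaveOn ℝ (Set.Ioo 0 (2 * Real.arcsin (1/c)))
      (fun y => Real.arccos (Real.sin (y/2) * c)) := by
  set b := 2 * Real.arcsin (1/c) with hb
  have h1 : (0:ℝ) < 1/c := by positivity
  have h2 : (1:ℝ)/c < 1 := by rw [div_lt_one (by linarith)]; linarith
  have ha2 : Real.arcsin (1/c) < π/2 := Real.arcsin_lt_pi_div_two.2 h2
  have hcont : ContinuousOn (fun y => Real.arccos (Real.sin (y/2) * c)) (Set.Ioo 0 b) :=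
    (Real.continuous_arccos.comp (by continuity)).continuousOn
  apply StrictAntiOn.strictConcaveOn_of_deriv (convex_Ioo 0 b) hcont
  rw [interior_Ioo]
  intro x hx y hy hxy
  rw [(hasDerivAt_f_s8 hc hx).deriv, (hasDerivAt_f_s8 hc hy).deriv]
  obtain ⟨hsx0, hsx1⟩ := sin_half_mem hc hx
  obtain ⟨hsy0, hsy1⟩ := sin_half_mem hc hy
  set sx := Real.sin (x/2)
  set sy := Real.sin (y/2)
  set cx := Real.cos (x/2)
  set cy := Real.cos (y/2)
  have hsxy : sx < sy := by
    apply Real.strictMonoOn_sin ⟨by linarith [Real.pi_pos, hx.1], by linarith [hx.2, hy.2]⟩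
      ⟨by linarith [Real.pi_pos, hy.1], by linarith [hy.2]⟩ (by linarith)
  have hcx : 0 < cx := Real.cos_pos_of_mem_Ioo ⟨by linarith [Real.pi_pos, hx.1], by linarith [hx.2]⟩
  have hcy : 0 < cy := Real.cos_pos_of_mem_Ioo ⟨by linarith [Real.pi_pos, hy.1], by linarith [hy.2]⟩
  have hcx2 : cx^2 = 1 - sx^2 := Real.cos_sq' (x/2)
  have hcy2 : cy^2 = 1 - sy^2 := Real.cos_sq' (y/2)
  clear_value sx sy cx cy
  have hcpos : (0:ℝ) < c := by linarith
  have hQx : 0 < 1 - (sx * c)^2 := by nlinarith [mul_pos hsx0 hcpos]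
  have hQy : 0 < 1 - (sy * c)^2 := by nlinarith [mul_pos hsy0 hcpos]
  have hsqx : 0 < Real.sqrt (1 - (sx * c)^2) := Real.sqrt_pos.2 hQx
  have hsqy : 0 < Real.sqrt (1 - (sy * c)^2) := Real.sqrt_pos.2 hQy
  have key : cx * Real.sqrt (1 - (sy * c)^2) < cy * Real.sqrt (1 - (sx * c)^2) := by
    apply lt_of_pow_lt_pow_left₀ 2 (by positivity)
    have eqy : Real.sqrt (1 - (sy * c)^2) ^ 2 = 1 - (sy * c)^2 := Real.sq_sqrt hQy.le
    have eqx : Real.sqrt (1 - (sx * c)^2) ^ 2 = 1 - (sx * c)^2 := Real.sq_sqrt hQx.le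
    have expand : ∀ (a q : ℝ), 0 ≤ q → (a * Real.sqrt q)^2 = a^2 * q := fun a q hq => by
      rw [mul_pow, Real.sq_sqrt hq]
    rw [expand cx _ hQy.le, expand cy _ hQx.le]
    rw [hcx2, hcy2]
    nlinarith [mul_pos (by nlinarith : (0:ℝ) < c^2 - 1) (by nlinarith : (0:ℝ) < sy^2 - sx^2)]
  have h3 : cx / Real.sqrt (1 - (sx * c)^2) < cy / Real.sqrt (1 - (sy * c)^2) :=
    (div_lt_div_iff₀ hsqx hsqy).2 key
  have h4 : c/2 * (cx / Real.sqrt (1 - (sx * c)^2)) < c/2 * (cy / Real.sqrt (1 - (sy * c)^2)) :=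
    mul_lt_mul_of_pos_left h3 (by linarith)
  have e1 : -(1 / Real.sqrt (1 - (sy * c)^2)) * (cy * (1/2) * c)
      = -(c/2 * (cy / Real.sqrt (1 - (sy * c)^2))) := by ring
  have e2 : -(1 / Real.sqrt (1 - (sx * c)^2)) * (cx * (1/2) * c)
      = -(c/2 * (cx / Real.sqrt (1 - (sx * c)^2))) := by ring
  rw [e1, e2]
  exact neg_lt_neg h4

end aux

theorem stmt8 (n : ℕ) (hn : 3 ≤ n) (r : ℝ) (hr : 0 < r)
    (hreg : Real.sin (π / n) * Real.cosh r < 1)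
    (θ : Fin n → ℝ) (hθ : ∀ i, θ i ∈ Set.Ioo 0 π)
    (hsum : ∑ i, θ i = 2 * π)
    (hlt : ∀ i, Real.sin (θ i / 2) * Real.cosh r < 1) :
    ∑ i, Real.arccos (Real.sin (θ i / 2) * Real.cosh r)
      ≤ n * Real.arccos (Real.sin (π / n) * Real.cosh r) ∧
    (∑ i, Real.arccos (Real.sin (θ i / 2) * Real.cosh r)
      = n * Real.arccos (Real.sin (π / n) * Real.cosh r) ↔ ∀ i, θ i = 2 * π / n) := by
  set c := Real.cosh r with hcdef
  have hc : 1 < c := by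
    rw [hcdef]; exact Real.one_lt_cosh.2 (ne_of_gt hr)
  have hnpos : (0:ℝ) < n := by positivity
  have hpi := Real.pi_pos
  set f : ℝ → ℝ := fun y => Real.arccos (Real.sin (y/2) * c) with hf
  set b := 2 * Real.arcsin (1/c) with hb
  set w : Fin n → ℝ := fun _ => (n:ℝ)⁻¹ with hw
  have hw0 : ∀ i ∈ Finset.univ, (0:ℝ) < w i := fun i _ => by positivity
  have hw1 : ∑ i : Fin n, w i = 1 := by
    simp only [hw, Finset.sum_const, Finset.card_univ, Fintype.card_fin, nsmul_eq_mul]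
    field_simp
  have hmean : ∑ i : Fin n, w i • θ i = 2 * π / n := by
    simp only [hw, smul_eq_mul, ← Finset.mul_sum, hsum]
    rw [inv_mul_eq_div]
  have hmem : ∀ i ∈ Finset.univ, θ i ∈ Set.Ioo 0 b :=
    fun i _ => mem_of_lt hc (hθ i).1 (hθ i).2 (hlt i)
  have hmeanmem : (2 * π / n : ℝ) ∈ Set.Ioo 0 b := by
    apply mem_of_lt hc (by positivity)
    · rw [div_lt_iff₀ hnpos]
      have : (3:ℝ) ≤ n := by exact_mod_cast hn
      nlinarith
    · have : (2 * π / n) / 2 = π / n := by ring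
      rw [this]; exact hreg
  have hsc := strictConcave_f hc
  have hfmean : f (2 * π / n) = Real.arccos (Real.sin (π / n) * c) := by
    have : (2 * π / n) / 2 = π / n := by ring
    simp [hf, this]
  have hjensen : ∑ i : Fin n, w i • f (θ i) ≤ f (∑ i : Fin n, w i • θ i) :=
    hsc.concaveOn.le_map_sum (fun i hi => (hw0 i hi).le) hw1 hmem
  simp only [hmean] at hjensen
  rw [show f (2 * π / n) = Real.arccos (Real.sin (π / n) * c) from hfmean] at hjensen
  have hsumw : ∑ i : Fin n, w i • f (θ i) = (n:ℝ)⁻¹ * ∑ i : Fin n, f (θ i) := by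
    simp [hw, smul_eq_mul, Finset.mul_sum]
  have hfθ : ∑ i : Fin n, f (θ i) = ∑ i, Real.arccos (Real.sin (θ i / 2) * c) := rfl
  have heq := hsc.map_sum_eq_iff hw0 hw1 hmem
  simp only [hmean] at heq
  rw [show 2 * π / (n:ℝ) / 2 = π / n from by ring] at heq
  constructor
  · rw [hsumw, hfθ] at hjensen
    have := mul_le_mul_of_nonneg_left hjensen hnpos.le
    rw [← mul_assoc, mul_inv_cancel₀ (ne_of_gt hnpos), one_mul] at this
    exact this
  · constructor
    · intro h
      have h2 : Real.arccos (Real.sin (π / n) * c)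
          = ∑ i : Fin n, w i • Real.arccos (Real.sin (θ i / 2) * c) := by
        have e : (∑ i : Fin n, w i • Real.arccos (Real.sin (θ i / 2) * c))
            = (n:ℝ)⁻¹ * ∑ i : Fin n, Real.arccos (Real.sin (θ i / 2) * c) := by
          simp [hw, smul_eq_mul, Finset.mul_sum]
        rw [e, h, ← mul_assoc, inv_mul_cancel₀ (ne_of_gt hnpos), one_mul]
      exact fun i => heq.mp h2 i (Finset.mem_univ i)
    · intro h
      rw [← hfθ]
      have : ∀ i : Fin n, f (θ i) = Real.arccos (Real.sin (π / n) * c) := by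
        intro i
        rw [h i]
        exact hfmean
      rw [Finset.sum_congr rfl (fun i _ => this i), Finset.sum_const, Finset.card_univ]
      simp [nsmul_eq_mul]
end

section
/- For fixed n ≥ 3, the function g(R) = arsinh(sin(π/n)·sinh(R)) is strictly convex on (0, ∞). -/
open Real

lemma alg_key (k s c v : ℝ) (hv : v ≠ 0)
    (hvsq : v ^ 2 = 1 + (k * s) ^ 2) (hid : c ^ 2 = 1 + s ^ 2) :
    (k * s * v - k * c * (1 / (2 * v) * (2 * (k * s) * (k * c)))) / v ^ 2 =
      k * s * (1 - k ^ 2) / v ^ 3 := by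
  field_simp
  linear_combination (k*s)*hvsq - (k^3*s)*hid

lemma aux_conv (k : ℝ) (hk0 : 0 < k) (hk1 : k < 1) :
    StrictConvexOn ℝ (Set.Ioi 0) (fun R => Real.arsinh (k * Real.sinh R)) := by
  have hφ : ∀ y : ℝ, (0:ℝ) < 1 + (k * Real.sinh y) ^ 2 := fun y => by positivity
  have hd1 : ∀ y : ℝ, HasDerivAt (fun R => Real.arsinh (k * Real.sinh R))
      (k * Real.cosh y / Real.sqrt (1 + (k * Real.sinh y) ^ 2)) y := by
    intro y
    have h1 : HasDerivAt (fun R => k * Real.sinh R) (k * Real.cosh y) y :=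
      (Real.hasDerivAt_sinh y).const_mul k
    have h2 := (Real.hasDerivAt_arsinh (k * Real.sinh y)).comp y h1
    simpa [div_eq_mul_inv, mul_comm, Function.comp_def] using h2
  apply strictConvexOn_of_deriv2_pos (convex_Ioi 0)
    ((Real.continuous_arsinh.comp (continuous_const.mul Real.continuous_sinh)).continuousOn)
  intro x hx
  rw [interior_Ioi] at hx
  have hs : 0 < Real.sinh x := Real.sinh_pos_iff.mpr hx
  have hv0 : 0 < Real.sqrt (1 + (k * Real.sinh x) ^ 2) := Real.sqrt_pos.mpr (hφ x)
  have hv : Real.sqrt (1 + (k * Real.sinh x) ^ 2) ≠ 0 := ne_of_gt hv0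
  have hvsq : Real.sqrt (1 + (k * Real.sinh x) ^ 2) ^ 2 = 1 + (k * Real.sinh x) ^ 2 :=
    Real.sq_sqrt (le_of_lt (hφ x))
  have hid : Real.cosh x ^ 2 = 1 + Real.sinh x ^ 2 := Real.cosh_sq' x
  have hderiv : deriv (fun R => Real.arsinh (k * Real.sinh R)) =
      fun y => k * Real.cosh y / Real.sqrt (1 + (k * Real.sinh y) ^ 2) :=
    funext fun y => (hd1 y).deriv
  have hinner : HasDerivAt (fun y => 1 + (k * Real.sinh y) ^ 2)
      (2 * (k * Real.sinh x) * (k * Real.cosh x)) x := by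
    have h1 : HasDerivAt (fun R => k * Real.sinh R) (k * Real.cosh x) x :=
      (Real.hasDerivAt_sinh x).const_mul k
    have := (h1.pow 2).const_add 1
    simpa [pow_one] using this
  have hdsqrt : HasDerivAt (fun y => Real.sqrt (1 + (k * Real.sinh y) ^ 2))
      (1 / (2 * Real.sqrt (1 + (k * Real.sinh x) ^ 2)) *
        (2 * (k * Real.sinh x) * (k * Real.cosh x))) x :=
    (Real.hasDerivAt_sqrt (ne_of_gt (hφ x))).comp x hinner
  have hd2 : HasDerivAt (fun y => k * Real.cosh y / Real.sqrt (1 + (k * Real.sinh y) ^ 2))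
      ((k * Real.sinh x * Real.sqrt (1 + (k * Real.sinh x) ^ 2) -
        k * Real.cosh x * (1 / (2 * Real.sqrt (1 + (k * Real.sinh x) ^ 2)) *
          (2 * (k * Real.sinh x) * (k * Real.cosh x)))) /
        Real.sqrt (1 + (k * Real.sinh x) ^ 2) ^ 2) x :=
    ((Real.hasDerivAt_cosh x).const_mul k).div hdsqrt hv
  have hD2 : deriv^[2] (fun R => Real.arsinh (k * Real.sinh R)) x =
      (k * Real.sinh x * Real.sqrt (1 + (k * Real.sinh x) ^ 2) -
        k * Real.cosh x * (1 / (2 * Real.sqrt (1 + (k * Real.sinh x) ^ 2)) *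
          (2 * (k * Real.sinh x) * (k * Real.cosh x)))) /
        Real.sqrt (1 + (k * Real.sinh x) ^ 2) ^ 2 := by
    simp only [Function.iterate_succ, Function.iterate_zero, Function.comp_apply, id_eq]
    rw [hderiv]
    exact hd2.deriv
  show 0 < deriv^[2] (fun R => Real.arsinh (k * Real.sinh R)) x
  rw [hD2]
  rw [alg_key k (Real.sinh x) (Real.cosh x) _ hv hvsq hid]
  have h1k : 0 < 1 - k ^ 2 := by nlinarith
  apply div_pos (mul_pos (mul_pos hk0 hs) h1k) (by positivity)

theorem stmt10 (n : ℕ) (hn : 3 ≤ n) :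
    StrictConvexOn ℝ (Set.Ioi 0)
      (fun R => Real.arsinh (Real.sin (π / n) * Real.sinh R)) := by
  have hn3 : (3:ℝ) ≤ n := by exact_mod_cast hn
  have hpi := Real.pi_pos
  have h3 : π / n ≤ π / 3 := by
    apply div_le_div_of_nonneg_left hpi.le (by norm_num) hn3
  have h2 : π / n < π / 2 := by linarith
  have hk0 : 0 < Real.sin (π / n) := by
    apply Real.sin_pos_of_pos_of_lt_pi
    · positivity
    · linarith
  have hk1 : Real.sin (π / n) < 1 := by
    have := Real.sin_lt_sin_of_lt_of_le_pi_div_two (x := π / n) (y := π / 2)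
      (by nlinarith [div_nonneg hpi.le (by positivity : (0:ℝ) ≤ (n:ℝ))]) le_rfl h2
    simpa using this
  exact aux_conv _ hk0 hk1
end

section
/- For fixed n ≥ 3, the function g(r) = artanh(tan(π/n)·sinh(r)) is strictly convex on the interval of r > 0 where tan(π/n)·sinh(r) < 1. -/
open Real

lemma aux_main (t : ℝ) (ht : 0 < t) :
    StrictConvexOn ℝ {r : ℝ | 0 < r ∧ t * Real.sinh r < 1}
      (fun r => _root_.artanh (t * Real.sinh r)) := by
  have hSet : {r : ℝ | 0 < r ∧ t * Real.sinh r < 1}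
      = Set.Ioo 0 (Real.arsinh (1 / t)) := by
    ext r
    simp only [Set.mem_setOf_eq, Set.mem_Ioo]
    constructor
    · rintro ⟨h0, h1⟩
      refine ⟨h0, ?_⟩
      rw [← Real.sinh_lt_sinh, Real.sinh_arsinh, lt_div_iff₀ ht, mul_comm]
      exact h1
    · rintro ⟨h0, h1⟩
      refine ⟨h0, ?_⟩
      rw [← Real.sinh_lt_sinh, Real.sinh_arsinh, lt_div_iff₀ ht, mul_comm] at h1
      exact h1
  set S : Set ℝ := Set.Ioo 0 (Real.arsinh (1 / t)) with hS
  rw [hSet]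
  -- basic facts on S
  have hfacts : ∀ r ∈ S, 0 < Real.sinh r ∧ t * Real.sinh r < 1 := by
    intro r hr
    obtain ⟨h0, h1⟩ := hr
    refine ⟨Real.sinh_pos_iff.2 h0, ?_⟩
    rw [← Real.sinh_lt_sinh, ] at h1
    rw [Real.sinh_arsinh] at h1
    calc t * Real.sinh r < t * (1 / t) := by
          exact (mul_lt_mul_iff_right₀ ht).2 h1
      _ = 1 := by field_simp
  set F : ℝ → ℝ := fun r =>
    (Real.log (1 + t * Real.sinh r) - Real.log (1 - t * Real.sinh r)) / 2 with hFdef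
  set F1 : ℝ → ℝ := fun r =>
    (t * Real.cosh r / (1 + t * Real.sinh r) + t * Real.cosh r / (1 - t * Real.sinh r)) / 2
    with hF1def
  set F2 : ℝ → ℝ := fun r =>
    ((t * Real.sinh r * (1 + t * Real.sinh r) - t * Real.cosh r * (t * Real.cosh r)) /
        (1 + t * Real.sinh r) ^ 2 +
      (t * Real.sinh r * (1 - t * Real.sinh r) - t * Real.cosh r * (-(t * Real.cosh r))) /
        (1 - t * Real.sinh r) ^ 2) / 2 with hF2def
  have hd : ∀ r ∈ S, 0 < 1 + t * Real.sinh r ∧ 0 < 1 - t * Real.sinh r := by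
    intro r hr
    obtain ⟨hσ, hu⟩ := hfacts r hr
    constructor
    · nlinarith
    · linarith
  -- derivative of F
  have hF' : ∀ r ∈ S, HasDerivAt F (F1 r) r := by
    intro r hr
    obtain ⟨hd1, hd2⟩ := hd r hr
    have h1 : HasDerivAt (fun x => t * Real.sinh x) (t * Real.cosh r) r :=
      (Real.hasDerivAt_sinh r).const_mul t
    have h2 : HasDerivAt (fun x => 1 + t * Real.sinh x) (t * Real.cosh r) r := h1.const_add 1
    have h3 : HasDerivAt (fun x => 1 - t * Real.sinh x) (-(t * Real.cosh r)) r := h1.const_sub 1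
    have hlog1 := h2.log hd1.ne'
    have hlog2 := h3.log hd2.ne'
    have h4 := (hlog1.sub hlog2).div_const 2
    refine h4.congr_deriv ?_
    simp only [hF1def]
    ring
  -- derivative of F1
  have hF1' : ∀ r ∈ S, HasDerivAt F1 (F2 r) r := by
    intro r hr
    obtain ⟨hd1, hd2⟩ := hd r hr
    have h1 : HasDerivAt (fun x => t * Real.sinh x) (t * Real.cosh r) r :=
      (Real.hasDerivAt_sinh r).const_mul t
    have h2 : HasDerivAt (fun x => 1 + t * Real.sinh x) (t * Real.cosh r) r := h1.const_add 1
    have h3 : HasDerivAt (fun x => 1 - t * Real.sinh x) (-(t * Real.cosh r)) r := h1.const_sub 1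
    have hc1 : HasDerivAt (fun x => t * Real.cosh x) (t * Real.sinh r) r :=
      (Real.hasDerivAt_cosh r).const_mul t
    have q1 := hc1.div h2 hd1.ne'
    have q2 := hc1.div h3 hd2.ne'
    exact (q1.add q2).div_const 2
  -- positivity of F2 on S
  have hF2pos : ∀ r ∈ S, 0 < F2 r := by
    intro r hr
    obtain ⟨hσ, hu⟩ := hfacts r hr
    obtain ⟨hd1, hd2⟩ := hd r hr
    have hc2 : Real.cosh r ^ 2 = 1 + Real.sinh r ^ 2 := by
      rw [Real.cosh_sq]; ring
    simp only [hF2def]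
    have hne1 : ((1 + t * Real.sinh r) ^ 2) ≠ 0 := by positivity
    have hne2 : ((1 - t * Real.sinh r) ^ 2) ≠ 0 := pow_ne_zero 2 hd2.ne'
    rw [div_add_div _ _ hne1 hne2]
    apply div_pos
    · apply div_pos
      · nlinarith [mul_pos ht hσ, mul_pos (mul_pos ht hσ)
          (mul_pos hd1 hd2), mul_pos (mul_pos (mul_pos ht ht) (mul_pos ht hσ))
          (by nlinarith : (0:ℝ) < 1 + Real.sinh r ^ 2)]
      · positivity
    · norm_num
  have hSopen : interior S = S := interior_Ioo
  have hconv : Convex ℝ S := convex_Ioo _ _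
  -- deriv F = F1 on S
  have hderivF : ∀ r ∈ S, deriv F r = F1 r := fun r hr => (hF' r hr).deriv
  have hderivF1 : ∀ r ∈ S, deriv F1 r = F2 r := fun r hr => (hF1' r hr).deriv
  have hcontF : ContinuousOn F S := fun r hr =>
    (hF' r hr).continuousAt.continuousWithinAt
  have hcontF1 : ContinuousOn F1 S := fun r hr =>
    (hF1' r hr).continuousAt.continuousWithinAt
  have hmono : StrictMonoOn F1 S := by
    apply strictMonoOn_of_deriv_pos hconv hcontF1
    intro x hx
    rw [hSopen] at hx
    rw [hderivF1 x hx]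
    exact hF2pos x hx
  have hmono' : StrictMonoOn (deriv F) (interior S) := by
    rw [hSopen]
    intro a ha b hb hab
    rw [hderivF a ha, hderivF b hb]
    exact hmono ha hb hab
  have hFconv : StrictConvexOn ℝ S F := hmono'.strictConvexOn_of_deriv hconv hcontF
  -- transfer to artanh
  have heq : ∀ r ∈ S, _root_.artanh (t * Real.sinh r) = F r := by
    intro r hr
    obtain ⟨hd1, hd2⟩ := hd r hr
    simp only [_root_.artanh, hFdef]
    rw [Real.log_div hd1.ne' hd2.ne']
  obtain ⟨hc, hlt⟩ := hFconv
  refine ⟨hc, fun x hx y hy hxy a b ha hb hab => ?_⟩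
  have hmem : a • x + b • y ∈ S := hc hx hy ha.le hb.le hab
  have := hlt hx hy hxy ha hb hab
  simp only at this ⊢
  rw [heq x hx, heq y hy, heq _ hmem]
  exact this

theorem stmt12 (n : ℕ) (hn : 3 ≤ n) :
    StrictConvexOn ℝ {r : ℝ | 0 < r ∧ Real.tan (π / n) * Real.sinh r < 1}
      (fun r => _root_.artanh (Real.tan (π / n) * Real.sinh r)) := by
  have hn' : (3:ℝ) ≤ n := by exact_mod_cast hn
  have ht : 0 < Real.tan (π / n) := by
    apply Real.tan_pos_of_pos_of_lt_pi_div_two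
    · positivity
    · rw [div_lt_iff₀ (by linarith : (0:ℝ) < n)]
      nlinarith [Real.pi_pos]
  exact aux_main _ ht
end

section
/- Fix integers n ≥ 3 and k ≥ 1 and T > 0 with tan(π/n)·sinh(rᵢ) < 1 for each i, where r₁ + ⋯ + r_k = T. Then ∑ᵢ 2n·artanh(tan(π/n)·sinh(rᵢ)) ≥ 2nk·artanh(tan(π/n)·sinh(T/k)), with equality iff all rᵢ = T/k. (Total-perimeter inequality for tangential hyperbolic n-gons with fixed total inradius.) -/
open Real

lemma hasDerivAt_artanh {y : ℝ} (h : |y| < 1) :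
    HasDerivAt _root_.artanh (1 / (1 - y ^ 2)) y := by
  obtain ⟨h1, h2⟩ := abs_lt.mp h
  have hy1 : 0 < 1 + y := by linarith
  have hy2 : 0 < 1 - y := by linarith
  have d1 : HasDerivAt (fun x : ℝ => Real.log (1 + x)) (1 / (1 + y)) y := by
    have := (Real.hasDerivAt_log hy1.ne').comp y ((hasDerivAt_id y).const_add 1)
    simpa [one_div, Function.comp_def] using this
  have d2 : HasDerivAt (fun x : ℝ => Real.log (1 - x)) (-(1 / (1 - y))) y := by
    have := (Real.hasDerivAt_log hy2.ne').comp y ((hasDerivAt_id y).const_sub 1)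
    simpa [one_div, Function.comp_def] using this
  have dF : HasDerivAt (fun x : ℝ => (Real.log (1 + x) - Real.log (1 - x)) / 2)
      (1 / (1 - y ^ 2)) y := by
    have := (d1.sub d2).div_const 2
    refine this.congr_deriv ?_
    have hne : (1 : ℝ) - y ^ 2 ≠ 0 := by nlinarith
    field_simp [hy1.ne', hy2.ne']
    ring
  apply dF.congr_of_eventuallyEq
  filter_upwards [isOpen_Ioo.mem_nhds (show y ∈ Set.Ioo (-1 : ℝ) 1 from ⟨h1, h2⟩)] with x hx
  have hx1 : (0 : ℝ) < 1 + x := by linarith [hx.1]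
  have hx2 : (0 : ℝ) < 1 - x := by linarith [hx.2]
  rw [_root_.artanh, Real.log_div hx1.ne' hx2.ne']

lemma hasDerivAt_g {c : ℝ} {x : ℝ} (h : |c * Real.sinh x| < 1) :
    HasDerivAt (fun x => _root_.artanh (c * Real.sinh x))
      (c * Real.cosh x / (1 - (c * Real.sinh x) ^ 2)) x := by
  have inner : HasDerivAt (fun x => c * Real.sinh x) (c * Real.cosh x) x :=
    (Real.hasDerivAt_sinh x).const_mul c
  have := (hasDerivAt_artanh h).comp x inner
  refine this.congr_deriv ?_
  ring

theorem stmt13 (n k : ℕ) (hn : 3 ≤ n) (hk : 1 ≤ k) (T : ℝ) (hT : 0 < T)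
    (r : Fin k → ℝ) (hr : ∀ i, 0 < r i)
    (hlt : ∀ i, Real.tan (π / n) * Real.sinh (r i) < 1)
    (hsum : ∑ i, r i = T)
    (hTk : Real.tan (π / n) * Real.sinh (T / k) < 1) :
    ∑ i, 2 * n * _root_.artanh (Real.tan (π / n) * Real.sinh (r i))
      ≥ 2 * n * k * _root_.artanh (Real.tan (π / n) * Real.sinh (T / k)) ∧
    (∑ i, 2 * n * _root_.artanh (Real.tan (π / n) * Real.sinh (r i))
      = 2 * n * k * _root_.artanh (Real.tan (π / n) * Real.sinh (T / k)) ↔ ∀ i, r i = T / k) := by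
  have hn3 : (3 : ℝ) ≤ (n : ℝ) := by exact_mod_cast hn
  have hnpos : (0 : ℝ) < n := by linarith
  have hkpos : (0 : ℝ) < k := by exact_mod_cast hk
  set c : ℝ := Real.tan (π / n) with hc
  have hπn0 : 0 < π / n := div_pos Real.pi_pos hnpos
  have hπn2 : π / n < π / 2 := by
    rw [div_lt_div_iff₀ hnpos two_pos]
    nlinarith [Real.pi_pos]
  have hcpos : 0 < c := Real.tan_pos_of_pos_of_lt_pi_div_two hπn0 hπn2
  set s : ℝ := Real.arsinh (1 / c) with hs
  have hsinh_s : Real.sinh s = 1 / c := Real.sinh_arsinh _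
  -- membership criterion
  have hmem_iff : ∀ x : ℝ, 0 < x → c * Real.sinh x < 1 → x ∈ Set.Ico (0 : ℝ) s := by
    intro x hx hcx
    refine ⟨hx.le, ?_⟩
    rw [← Real.sinh_lt_sinh, hsinh_s]
    rw [lt_div_iff₀ hcpos, mul_comm]
    exact hcx
  set g : ℝ → ℝ := fun x => _root_.artanh (c * Real.sinh x) with hg
  have habs : ∀ x ∈ Set.Ico (0 : ℝ) s, |c * Real.sinh x| < 1 := by
    intro x hx
    have hsx : 0 ≤ Real.sinh x := by
      simpa using Real.sinh_le_sinh.mpr hx.1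
    rw [abs_of_nonneg (by positivity)]
    have : Real.sinh x < 1 / c := by
      rw [← hsinh_s]
      exact Real.sinh_lt_sinh.mpr hx.2
    calc c * Real.sinh x < c * (1 / c) := by
          exact mul_lt_mul_of_pos_left this hcpos
      _ = 1 := by field_simp
  -- strict convexity
  have hconv : StrictConvexOn ℝ (Set.Ico (0 : ℝ) s) g := by
    apply StrictMonoOn.strictConvexOn_of_deriv (convex_Ico 0 s)
    · intro x hx
      exact (hasDerivAt_g (habs x hx)).continuousAt.continuousWithinAt
    · rw [interior_Ico]
      intro x hx y hy hxy
      have hdx := (hasDerivAt_g (habs x ⟨hx.1.le, hx.2⟩)).deriv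
      have hdy := (hasDerivAt_g (habs y ⟨hy.1.le, hy.2⟩)).deriv
      rw [hg]
      rw [hdx, hdy]
      have hax := habs x ⟨hx.1.le, hx.2⟩
      have hay := habs y ⟨hy.1.le, hy.2⟩
      have hDx : 0 < 1 - (c * Real.sinh x) ^ 2 := by
        nlinarith [abs_nonneg (c * Real.sinh x), sq_abs (c * Real.sinh x),
          abs_lt.mp hax]
      have hDy : 0 < 1 - (c * Real.sinh y) ^ 2 := by
        nlinarith [abs_lt.mp hay]
      have hcoshlt : Real.cosh x < Real.cosh y := by
        rw [Real.cosh_lt_cosh, abs_of_pos hx.1, abs_of_pos (hx.1.trans hxy)]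
        exact hxy
      have hsinhlt : Real.sinh x < Real.sinh y := Real.sinh_lt_sinh.mpr hxy
      have hsx : 0 < Real.sinh x := Real.sinh_pos_iff.mpr hx.1
      have h1 : 0 < c * Real.sinh x := mul_pos hcpos hsx
      have h2 : c * Real.sinh x < c * Real.sinh y := mul_lt_mul_of_pos_left hsinhlt hcpos
      have hDlt : 1 - (c * Real.sinh y) ^ 2 < 1 - (c * Real.sinh x) ^ 2 := by
        nlinarith
      have hcoshpos : 0 < Real.cosh x := Real.cosh_pos x
      exact div_lt_div₀ (mul_lt_mul_of_pos_left hcoshlt hcpos) hDlt.le (by positivity) hDy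
  -- Jensen setup
  have hmem : ∀ i : Fin k, r i ∈ Set.Ico (0 : ℝ) s := fun i => hmem_iff _ (hr i) (hlt i)
  have hTkpos : 0 < T / k := div_pos hT hkpos
  have hTkmem : T / (k : ℝ) ∈ Set.Ico (0 : ℝ) s := hmem_iff _ hTkpos hTk
  set w : Fin k → ℝ := fun _ => (k : ℝ)⁻¹ with hw
  have hw0 : ∀ i ∈ Finset.univ, (0 : ℝ) < w i := fun i _ => by positivity
  have hw1 : ∑ i : Fin k, w i = 1 := by
    simp [hw, Finset.card_univ]
    field_simp
  have hwsum : ∑ i : Fin k, w i • r i = T / k := by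
    simp only [hw, smul_eq_mul, ← Finset.mul_sum, hsum]
    rw [div_eq_inv_mul]
  have hmem' : ∀ i ∈ Finset.univ, r i ∈ Set.Ico (0 : ℝ) s := fun i _ => hmem i
  have hjensen : g (∑ i, w i • r i) ≤ ∑ i, w i • g (r i) :=
    hconv.convexOn.map_sum_le (fun i _ => (hw0 i (Finset.mem_univ i)).le) hw1 hmem'
  have hswap : ∑ i, w i • g (r i) = (k : ℝ)⁻¹ * ∑ i, g (r i) := by
    simp [hw, smul_eq_mul, ← Finset.mul_sum]
  have hkne : (k : ℝ) ≠ 0 := hkpos.ne'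
  have key : (k : ℝ) * g (T / k) ≤ ∑ i, g (r i) := by
    rw [hwsum] at hjensen
    rw [hswap] at hjensen
    calc (k : ℝ) * g (T / k) ≤ (k : ℝ) * ((k : ℝ)⁻¹ * ∑ i, g (r i)) :=
          mul_le_mul_of_nonneg_left hjensen hkpos.le
      _ = ∑ i, g (r i) := by field_simp
  have hsum_eq : ∑ i, 2 * (n : ℝ) * _root_.artanh (c * Real.sinh (r i))
      = 2 * (n : ℝ) * ∑ i, g (r i) := by
    rw [Finset.mul_sum]
  constructor
  · rw [hsum_eq]
    have : 2 * (n : ℝ) * ((k : ℝ) * g (T / k)) ≤ 2 * (n : ℝ) * ∑ i, g (r i) :=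
      mul_le_mul_of_nonneg_left key (by positivity)
    calc 2 * (n : ℝ) * (k : ℝ) * _root_.artanh (c * Real.sinh (T / k))
        = 2 * (n : ℝ) * ((k : ℝ) * g (T / k)) := by rw [hg]; ring
      _ ≤ 2 * (n : ℝ) * ∑ i, g (r i) := this
  · have heqiff := hconv.map_sum_eq_iff hw0 hw1 hmem'
    rw [hwsum, hswap] at heqiff
    constructor
    · intro heq
      rw [hsum_eq] at heq
      have h1 : ∑ i, g (r i) = (k : ℝ) * g (T / k) := by
        have h2n : (2 : ℝ) * n ≠ 0 := by positivity
        have : 2 * (n : ℝ) * ∑ i, g (r i) = 2 * (n : ℝ) * ((k : ℝ) * g (T / k)) := by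
          rw [heq, hg]; ring
        exact mul_left_cancel₀ h2n this
      have h2 : g (T / k) = (k : ℝ)⁻¹ * ∑ i, g (r i) := by
        rw [h1]; field_simp
      intro i
      exact heqiff.mp h2 i (Finset.mem_univ i)
    · intro hall
      rw [hsum_eq]
      have : ∑ i, g (r i) = (k : ℝ) * g (T / k) := by
        calc ∑ i, g (r i) = ∑ _i : Fin k, g (T / k) := by
              apply Finset.sum_congr rfl
              intro i _
              rw [hall i]
          _ = (k : ℝ) * g (T / k) := by
              simp [Finset.card_univ, mul_comm]
      rw [this]; ring
end

section
/- For fixed n ≥ 3, the function h(r) = arccos(sin(π/n)·cosh(r)) is strictly concave on the interval of r > 0 where sin(π/n)·cosh(r) < 1. -/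
open Real

lemma convexOn_cosh' : ConvexOn ℝ Set.univ Real.cosh := by
  refine ⟨convex_univ, fun x _ y _ a b ha hb hab => ?_⟩
  have h1 := convexOn_exp.2 (Set.mem_univ x) (Set.mem_univ y) ha hb hab
  have h2 := convexOn_exp.2 (Set.mem_univ (-x)) (Set.mem_univ (-y)) ha hb hab
  simp only [smul_eq_mul] at h1 h2 ⊢
  simp only [Real.cosh_eq]
  have : -(a * x + b * y) = a * (-x) + b * (-y) := by ring
  rw [this]
  nlinarith [h1, h2]

theorem stmt16 (n : ℕ) (hn : 3 ≤ n) :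
    StrictConcaveOn ℝ {r : ℝ | 0 < r ∧ Real.sin (π / n) * Real.cosh r < 1}
      (fun r => Real.arccos (Real.sin (π / n) * Real.cosh r)) := by
  set s := Real.sin (π / n) with hs_def
  have hn0 : (0 : ℝ) < n := by positivity
  have hs : 0 < s := by
    apply Real.sin_pos_of_pos_of_lt_pi
    · positivity
    · calc π / n ≤ π / 3 := by
            apply div_le_div_of_nonneg_left pi_pos.le (by norm_num)
            exact_mod_cast hn
        _ < π := by linarith [pi_pos]
  have hSet : {r : ℝ | 0 < r ∧ s * Real.cosh r < 1}
      = Set.Ioi (0:ℝ) ∩ {r : ℝ | s * Real.cosh r < 1} := by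
    ext r; simp [Set.mem_setOf_eq, and_comm]
  have hConv : Convex ℝ {r : ℝ | 0 < r ∧ s * Real.cosh r < 1} := by
    rw [hSet]
    apply Convex.inter (convex_Ioi 0)
    have := (convexOn_cosh'.smul hs.le).convex_lt 1
    simpa using this
  -- key facts at points of the set
  have key : ∀ r : ℝ, 0 < r → s * Real.cosh r < 1 →
      HasDerivAt (fun r => Real.arccos (s * Real.cosh r))
        (-(1 / Real.sqrt (1 - (s * Real.cosh r) ^ 2)) * (s * Real.sinh r)) r := by
    intro r hr hlt
    have hpos : 0 < s * Real.cosh r := mul_pos hs (Real.cosh_pos _)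
    have h1 : s * Real.cosh r ≠ -1 := by linarith
    have h2 : s * Real.cosh r ≠ 1 := ne_of_lt hlt
    have hc : HasDerivAt (fun r => s * Real.cosh r) (s * Real.sinh r) r :=
      (Real.hasDerivAt_cosh r).const_mul s
    have := (Real.hasDerivAt_arccos h1 h2).comp r hc; exact this
  apply StrictAntiOn.strictConcaveOn_of_deriv hConv
  · apply Continuous.continuousOn
    exact Real.continuous_arccos.comp (continuous_const.mul Real.continuous_cosh)
  · intro x hx y hy hxy
    have hx' := interior_subset hx
    have hy' := interior_subset hy
    obtain ⟨hx0, hx1⟩ := hx'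
    obtain ⟨hy0, hy1⟩ := hy'
    rw [(key x hx0 hx1).deriv, (key y hy0 hy1).deriv]
    have hcx : 0 < s * Real.cosh x := mul_pos hs (Real.cosh_pos _)
    have hcy : 0 < s * Real.cosh y := mul_pos hs (Real.cosh_pos _)
    have hcoshlt : Real.cosh x < Real.cosh y := by
      have := Real.cosh_lt_cosh.mpr (by
        rwa [abs_of_pos hx0, abs_of_pos hy0] : |x| < |y|)
      exact this
    have hDxy : 1 - (s * Real.cosh y) ^ 2 < 1 - (s * Real.cosh x) ^ 2 := by
      have : s * Real.cosh x < s * Real.cosh y := by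
        exact (mul_lt_mul_iff_right₀ hs).mpr hcoshlt
      nlinarith
    have hDy : 0 < 1 - (s * Real.cosh y) ^ 2 := by nlinarith
    have hDx : 0 < 1 - (s * Real.cosh x) ^ 2 := by linarith
    have hsqrt : Real.sqrt (1 - (s * Real.cosh y) ^ 2)
        < Real.sqrt (1 - (s * Real.cosh x) ^ 2) :=
      Real.sqrt_lt_sqrt hDy.le hDxy
    have hsy : 0 < Real.sqrt (1 - (s * Real.cosh y) ^ 2) := Real.sqrt_pos.mpr hDy
    have hle : 1 / Real.sqrt (1 - (s * Real.cosh x) ^ 2)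
        ≤ 1 / Real.sqrt (1 - (s * Real.cosh y) ^ 2) :=
      one_div_le_one_div_of_le hsy hsqrt.le
    have hsinh : s * Real.sinh x < s * Real.sinh y :=
      (mul_lt_mul_iff_right₀ hs).mpr (Real.sinh_lt_sinh.mpr hxy)
    have hsinhx : 0 ≤ s * Real.sinh x :=
      mul_nonneg hs.le (Real.sinh_nonneg_iff.mpr hx0.le)
    have hb : 0 < 1 / Real.sqrt (1 - (s * Real.cosh y) ^ 2) := by positivity
    have := mul_lt_mul' hle hsinh hsinhx hb
    linarith
end

section
/- For fixed n ≥ 3, the function f(θ) = arcosh(cos(π/n)/sin(θ/2)) is strictly convex on the interval (0, 2·arcsin(√(1 − sin(π/n)))). -/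
open Real

lemma arcosh_hasDerivAt {x : ℝ} (hx : 1 < x) :
    HasDerivAt _root_.arcosh (1 / Real.sqrt (x ^ 2 - 1)) x := by
  have h1 : 0 < x ^ 2 - 1 := by nlinarith
  have ht : 0 < Real.sqrt (x ^ 2 - 1) := Real.sqrt_pos.2 h1
  have ht2 : Real.sqrt (x ^ 2 - 1) ^ 2 = x ^ 2 - 1 := Real.sq_sqrt h1.le
  have hsq : HasDerivAt (fun y : ℝ => Real.sqrt (y ^ 2 - 1))
      (1 / (2 * Real.sqrt (x ^ 2 - 1)) * (2 * x ^ 1)) x :=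
    (Real.hasDerivAt_sqrt h1.ne').comp x ((hasDerivAt_pow 2 x).sub_const 1)
  have hsum : HasDerivAt (fun y : ℝ => y + Real.sqrt (y ^ 2 - 1))
      (1 + 1 / (2 * Real.sqrt (x ^ 2 - 1)) * (2 * x ^ 1)) x := (hasDerivAt_id x).add hsq
  have hpos : 0 < x + Real.sqrt (x ^ 2 - 1) := by
    have := Real.sqrt_nonneg (x ^ 2 - 1); linarith
  have H := hsum.log hpos.ne'
  unfold _root_.arcosh
  convert H using 1
  field_simp
  nlinarith [ht2, ht]

set_option maxHeartbeats 1000000 in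
theorem stmt17 (n : ℕ) (hn : 3 ≤ n) :
    StrictConvexOn ℝ (Set.Ioo 0 (2 * Real.arcsin (Real.sqrt (1 - Real.sin (π / n)))))
      (fun θ => _root_.arcosh (Real.cos (π / n) / Real.sin (θ / 2))) := by
  set s := Real.sin (π / n) with hs_def
  set c := Real.cos (π / n) with hc_def
  have hn3 : (3 : ℝ) ≤ n := by exact_mod_cast hn
  have hπn_pos : 0 < π / n := by positivity
  have hπn_lt : π / n < π / 2 := by
    rw [div_lt_div_iff₀ (by linarith) (by norm_num)]
    nlinarith [Real.pi_pos]
  have hc_pos : 0 < c := Real.cos_pos_of_mem_Ioo ⟨by linarith [Real.pi_pos], hπn_lt⟩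
  have hs_pos : 0 < s := Real.sin_pos_of_pos_of_lt_pi hπn_pos (by linarith [Real.pi_pos])
  have hc2 : c ^ 2 = 1 - s ^ 2 := Real.cos_sq' (π / n)
  have hs1 : s < 1 := by nlinarith
  have h1s_pos : (0:ℝ) < 1 - s := by linarith
  -- facts about points in the interval
  have mem_facts : ∀ θ ∈ Set.Ioo (0:ℝ) (2 * Real.arcsin (Real.sqrt (1 - s))),
      0 < Real.sin (θ/2) ∧ Real.sin (θ/2) ^ 2 < 1 - s ∧ 0 < Real.cos (θ/2) ∧
        1 < c / Real.sin (θ/2) ∧ 0 < c ^ 2 - Real.sin (θ/2) ^ 2 := by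
    intro θ hθ
    obtain ⟨hθ0, hθE⟩ := hθ
    have hsq1 : Real.sqrt (1 - s) < 1 := by
      have := Real.sqrt_lt_sqrt (show (0:ℝ) ≤ 1 - s by linarith) (show 1 - s < 1 by linarith)
      rwa [Real.sqrt_one] at this
    have harc_lt : Real.arcsin (Real.sqrt (1 - s)) < π / 2 :=
      Real.arcsin_lt_pi_div_two.2 hsq1
    have hu_lt : θ / 2 < Real.arcsin (Real.sqrt (1 - s)) := by linarith
    have hu0 : 0 < θ / 2 := by linarith
    have hu_half : θ / 2 < π / 2 := by linarith
    have hsin_pos : 0 < Real.sin (θ/2) :=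
      Real.sin_pos_of_pos_of_lt_pi hu0 (by linarith [Real.pi_pos])
    have hsin_lt : Real.sin (θ/2) < Real.sqrt (1 - s) := by
      have := Real.sin_arcsin (by linarith [Real.sqrt_nonneg (1 - s)]) hsq1.le
      calc Real.sin (θ/2) < Real.sin (Real.arcsin (Real.sqrt (1 - s))) := by
            apply Real.strictMonoOn_sin ⟨by linarith, hu_half.le⟩
              ⟨by linarith [Real.arcsin_nonneg.2 (Real.sqrt_nonneg (1-s))], harc_lt.le⟩ hu_lt
        _ = Real.sqrt (1 - s) := this
    have hsin2 : Real.sin (θ/2) ^ 2 < 1 - s := by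
      have := pow_lt_pow_left₀ hsin_lt hsin_pos.le (n := 2) (by norm_num)
      rwa [Real.sq_sqrt (by linarith)] at this
    have hcos_pos : 0 < Real.cos (θ/2) :=
      Real.cos_pos_of_mem_Ioo ⟨by linarith, hu_half⟩
    have hsc : Real.sin (θ/2) < c := by nlinarith
    exact ⟨hsin_pos, hsin2, hcos_pos, (one_lt_div hsin_pos).2 hsc, by nlinarith⟩
  -- derivative
  have key : ∀ θ ∈ Set.Ioo (0:ℝ) (2 * Real.arcsin (Real.sqrt (1 - s))),
      HasDerivAt (fun θ => _root_.arcosh (c / Real.sin (θ / 2)))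
        (-(c * Real.cos (θ/2)) /
          (2 * Real.sin (θ/2) * Real.sqrt (c ^ 2 - Real.sin (θ/2) ^ 2))) θ := by
    intro θ hθ
    obtain ⟨hsin_pos, hsin2, hcos_pos, hx1, hct⟩ := mem_facts θ hθ
    have hsin_half : HasDerivAt (fun θ : ℝ => Real.sin (θ / 2)) (Real.cos (θ/2) * (1/2)) θ :=
      by have := (Real.hasDerivAt_sin (θ/2)).comp θ ((hasDerivAt_id θ).div_const 2); exact this
    have hdiv : HasDerivAt (fun θ : ℝ => c / Real.sin (θ / 2))
        ((0 * Real.sin (θ/2) - c * (Real.cos (θ/2) * (1/2))) / Real.sin (θ/2) ^ 2) θ :=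
      (hasDerivAt_const θ c).div hsin_half hsin_pos.ne'
    have H0 := (arcosh_hasDerivAt hx1).comp θ hdiv
    have H : HasDerivAt (fun θ => _root_.arcosh (c / Real.sin (θ / 2))) _ θ := H0
    convert H using 1
    have e1 : (c / Real.sin (θ/2)) ^ 2 - 1 = (c ^ 2 - Real.sin (θ/2) ^ 2) / Real.sin (θ/2) ^ 2 := by
      field_simp
    rw [e1, Real.sqrt_div (by linarith : (0:ℝ) ≤ c ^ 2 - Real.sin (θ/2) ^ 2),
      Real.sqrt_sq hsin_pos.le]
    have ht_pos : 0 < Real.sqrt (c ^ 2 - Real.sin (θ/2) ^ 2) := Real.sqrt_pos.2 hct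
    field_simp
    ring
  apply StrictMonoOn.strictConvexOn_of_deriv (convex_Ioo _ _)
  · exact fun θ hθ => (key θ hθ).continuousAt.continuousWithinAt
  · rw [interior_Ioo]
    intro θ1 hθ1 θ2 hθ2 hlt
    rw [(key θ1 hθ1).deriv, (key θ2 hθ2).deriv]
    obtain ⟨hsp1, hs21, hcp1, hx11, hct1⟩ := mem_facts θ1 hθ1
    obtain ⟨hsp2, hs22, hcp2, hx12, hct2⟩ := mem_facts θ2 hθ2
    set t1 := Real.sqrt (c ^ 2 - Real.sin (θ1/2) ^ 2) with ht1_def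
    set t2 := Real.sqrt (c ^ 2 - Real.sin (θ2/2) ^ 2) with ht2_def
    have ht1_pos : 0 < t1 := Real.sqrt_pos.2 hct1
    have ht2_pos : 0 < t2 := Real.sqrt_pos.2 hct2
    have ht1_sq : t1 ^ 2 = c ^ 2 - Real.sin (θ1/2) ^ 2 := Real.sq_sqrt hct1.le
    have ht2_sq : t2 ^ 2 = c ^ 2 - Real.sin (θ2/2) ^ 2 := Real.sq_sqrt hct2.le
    -- sin (θ1/2) < sin (θ2/2)
    have hu_half1 : θ1/2 < π/2 := by
      obtain ⟨h0, hE⟩ := hθ1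
      have : Real.arcsin (Real.sqrt (1 - s)) ≤ π/2 := Real.arcsin_le_pi_div_two _
      linarith
    have hu_half2 : θ2/2 < π/2 := by
      obtain ⟨h0, hE⟩ := hθ2
      have : Real.arcsin (Real.sqrt (1 - s)) ≤ π/2 := Real.arcsin_le_pi_div_two _
      linarith
    have hsin_lt : Real.sin (θ1/2) < Real.sin (θ2/2) := by
      apply Real.strictMonoOn_sin ⟨by linarith [hθ1.1], hu_half1.le⟩
        ⟨by linarith [hθ2.1], hu_half2.le⟩ (by linarith)
    have hh : Real.sin (θ1/2) ^ 2 < Real.sin (θ2/2) ^ 2 :=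
      pow_lt_pow_left₀ hsin_lt hsp1.le (by norm_num)
    set h1 := Real.sin (θ1/2) ^ 2
    set h2 := Real.sin (θ2/2) ^ 2
    -- key algebraic inequality
    have k1 : s < 1 - h1 := by linarith
    have k2 : s < 1 - h2 := by linarith
    have hprod : s ^ 2 < (1 - h1) * (1 - h2) := by
      have := mul_lt_mul'' k1 k2 hs_pos.le hs_pos.le
      nlinarith [this]
    have main : (1 - h2) * h1 * (c ^ 2 - h1) < (1 - h1) * h2 * (c ^ 2 - h2) := by
      nlinarith [mul_pos (show (0:ℝ) < h2 - h1 by linarith)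
        (show (0:ℝ) < (1 - h1) * (1 - h2) - s ^ 2 by linarith)]
    -- squares of the (positive) absolute values
    have hcos1 : Real.cos (θ1/2) ^ 2 = 1 - h1 := Real.cos_sq' _
    have hcos2 : Real.cos (θ2/2) ^ 2 = 1 - h2 := Real.cos_sq' _
    have hA1_pos : 0 < c * Real.cos (θ1/2) / (2 * Real.sin (θ1/2) * t1) := by positivity
    have hA2_pos : 0 < c * Real.cos (θ2/2) / (2 * Real.sin (θ2/2) * t2) := by positivity
    have hsq_lt : (c * Real.cos (θ2/2) / (2 * Real.sin (θ2/2) * t2)) ^ 2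
        < (c * Real.cos (θ1/2) / (2 * Real.sin (θ1/2) * t1)) ^ 2 := by
      rw [div_pow, div_pow, div_lt_div_iff₀ (by positivity) (by positivity)]
      have e2 : (c * Real.cos (θ2/2)) ^ 2 * (2 * Real.sin (θ1/2) * t1) ^ 2
          = 4 * c ^ 2 * ((1 - h2) * h1 * (c ^ 2 - h1)) := by
        linear_combination (4 * c^2 * h1 * t1^2) * hcos2 + (4 * c^2 * h1 * (1 - h2)) * ht1_sq
      have e3 : (c * Real.cos (θ1/2)) ^ 2 * (2 * Real.sin (θ2/2) * t2) ^ 2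
          = 4 * c ^ 2 * ((1 - h1) * h2 * (c ^ 2 - h2)) := by
        linear_combination (4 * c^2 * h2 * t2^2) * hcos1 + (4 * c^2 * h2 * (1 - h1)) * ht2_sq
      rw [e2, e3]
      have : 0 < 4 * c ^ 2 := by positivity
      exact (mul_lt_mul_iff_right₀ this).2 main
    have hAlt : c * Real.cos (θ2/2) / (2 * Real.sin (θ2/2) * t2)
        < c * Real.cos (θ1/2) / (2 * Real.sin (θ1/2) * t1) :=
      lt_of_pow_lt_pow_left₀ 2 hA1_pos.le hsq_lt
    rw [neg_div, neg_div, neg_lt_neg_iff]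
    exact hAlt
end

section
/- For fixed n ≥ 3, the function f(x) = arcsin(cos(π/n)/cosh(x/(2n))) is strictly convex on the interval (2n·arcosh(√(1 + sin(π/n))), ∞). -/
open Real

lemma cosh_arcosh {y : ℝ} (hy : 1 ≤ y) : Real.cosh (_root_.arcosh y) = y := by
  have h1 : (0:ℝ) ≤ y^2 - 1 := by nlinarith
  have hsq : Real.sqrt (y^2-1) ^ 2 = y^2 - 1 := Real.sq_sqrt h1
  have hz : 0 < y + Real.sqrt (y^2-1) := by positivity
  rw [_root_.arcosh, Real.cosh_log hz]
  have hinv : (y + Real.sqrt (y^2-1))⁻¹ = y - Real.sqrt (y^2-1) := by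
    exact inv_eq_of_mul_eq_one_right (by nlinarith [hsq])
  rw [hinv]; ring

lemma arcosh_nonneg {y : ℝ} (hy : 1 ≤ y) : 0 ≤ _root_.arcosh y := by
  apply Real.log_nonneg
  nlinarith [Real.sqrt_nonneg (y^2-1)]

lemma alg (c s m T S R : ℝ) (hm : 0 < m) (hT0 : 0 < T) (hR0 : 0 < R)
    (hR2 : R^2 = T^2-c^2) (hS2 : S^2 = T^2-1) (hcs : c^2+s^2=1) :
    c * ((T^2-1)^2 - s^2) / ((2*m)^2 * (T^2 * R^3)) =
    (-(c*(T*(1/(2*m)))) * (2*m*(T*R)) - -(c*S) * (2*m*(S*(1/(2*m))*R +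
      T*(1/(2*R)*(2*T^1*(S*(1/(2*m)))))))) / (2*m*(T*R))^2 := by
  have hm' : m ≠ 0 := hm.ne'
  have hT' : T ≠ 0 := hT0.ne'
  have hR' : R ≠ 0 := hR0.ne'
  field_simp
  linear_combination (-c*(R^2+T^2)) * hS2 + c * hR2 - c * hcs

set_option maxHeartbeats 1000000 in
theorem stmt19 (n : ℕ) (hn : 3 ≤ n) :
    StrictConvexOn ℝ (Set.Ioi (2 * n * _root_.arcosh (Real.sqrt (1 + Real.sin (π / n)))))
      (fun x => Real.arcsin (Real.cos (π / n) / Real.cosh (x / (2 * n)))) := by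
  have hn3 : (3:ℝ) ≤ (n:ℝ) := by exact_mod_cast hn
  have hnpos : (0:ℝ) < (n:ℝ) := by linarith
  have h2n : (0:ℝ) < 2 * (n:ℝ) := by linarith
  set c := Real.cos (π / n) with hc
  set s := Real.sin (π / n) with hs
  have hπn_pos : 0 < π / n := div_pos pi_pos hnpos
  have hπn_lt : π / n < π / 2 := by
    rw [div_lt_div_iff₀ hnpos two_pos]
    nlinarith [pi_pos]
  have hs_pos : 0 < s := Real.sin_pos_of_pos_of_lt_pi hπn_pos (by nlinarith [pi_pos])
  have hc_pos : 0 < c := Real.cos_pos_of_mem_Ioo ⟨by linarith, hπn_lt⟩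
  have hcs : c^2 + s^2 = 1 := by rw [hc, hs]; exact Real.cos_sq_add_sin_sq _
  have hc_lt1 : c < 1 := by nlinarith
  -- the left endpoint
  have hy1 : (1:ℝ) ≤ Real.sqrt (1 + s) := Real.one_le_sqrt.mpr (by linarith)
  set A := _root_.arcosh (Real.sqrt (1 + s)) with hA
  have hA0 : 0 ≤ A := _root_.arcosh_nonneg hy1
  have hcoshA : Real.cosh A = Real.sqrt (1 + s) := _root_.cosh_arcosh hy1
  set D := 2 * (n:ℝ) * A with hD
  -- basic facts for points in the domain
  have key : ∀ x ∈ Set.Ioi D, A < x / (2 * n) := by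
    intro x hx
    rw [lt_div_iff₀ h2n]
    rw [Set.mem_Ioi, hD] at hx
    linarith [hx]
  have hT_facts : ∀ x ∈ Set.Ioi D, 1 + s < Real.cosh (x / (2*n)) ^ 2 ∧
      0 < Real.sinh (x / (2*n)) ∧ 1 < Real.cosh (x / (2*n)) := by
    intro x hx
    have hu : A < x / (2*n) := key x hx
    have hu0 : 0 < x / (2*n) := lt_of_le_of_lt hA0 hu
    have hTA : Real.cosh A < Real.cosh (x / (2*n)) := by
      rw [Real.cosh_lt_cosh, abs_of_nonneg hA0, abs_of_pos hu0]; exact hu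
    have h1T : 1 ≤ Real.cosh A := by rw [hcoshA]; exact hy1
    refine ⟨?_, Real.sinh_pos_iff.mpr hu0, by linarith⟩
    have : Real.sqrt (1+s) < Real.cosh (x/(2*n)) := hcoshA ▸ hTA
    nlinarith [Real.sq_sqrt (by linarith : (0:ℝ) ≤ 1 + s)]
  -- first derivative
  set F1 : ℝ → ℝ := fun x => -(c * Real.sinh (x/(2*n))) /
      (2*n * (Real.cosh (x/(2*n)) * Real.sqrt (Real.cosh (x/(2*n))^2 - c^2))) with hF1
  have hderiv1 : ∀ x ∈ Set.Ioi D, HasDerivAt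
      (fun x => Real.arcsin (c / Real.cosh (x / (2 * n)))) (F1 x) x := by
    intro x hx
    obtain ⟨hT2, hS0, hT1⟩ := hT_facts x hx
    set T := Real.cosh (x/(2*n)) with hT
    set S := Real.sinh (x/(2*n)) with hS'
    have hT0 : 0 < T := by linarith
    have hTc2 : 0 < T^2 - c^2 := by nlinarith
    have hR0 : 0 < Real.sqrt (T^2 - c^2) := Real.sqrt_pos.mpr hTc2
    have hR2 : Real.sqrt (T^2 - c^2) ^ 2 = T^2 - c^2 := Real.sq_sqrt hTc2.le
    have hu : HasDerivAt (fun x : ℝ => x/(2*(n:ℝ))) (1/(2*n)) x := by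
      simpa using (hasDerivAt_id x).div_const (2*(n:ℝ))
    have hTd : HasDerivAt (fun x : ℝ => Real.cosh (x/(2*n))) (S * (1/(2*n))) x := by
      have h := (Real.hasDerivAt_cosh (x/(2*n))).comp x hu; exact h
    have hgd : HasDerivAt (fun x : ℝ => c / Real.cosh (x/(2*n)))
        ((0 * T - c * (S * (1/(2*n)))) / T^2) x :=
      (hasDerivAt_const x c).div hTd hT0.ne'
    have hgT : c / T < 1 := by
      rw [div_lt_one hT0]; linarith
    have hgT0 : 0 < c / T := div_pos hc_pos hT0
    have harc : HasDerivAt Real.arcsin (1 / Real.sqrt (1 - (c/T)^2)) (c/T) :=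
      Real.hasDerivAt_arcsin (by linarith) (by linarith)
    have hcomp := harc.comp x hgd
    refine hcomp.congr_deriv ?_
    have hsq : Real.sqrt (1 - (c/T)^2) = Real.sqrt (T^2 - c^2) / T := by
      rw [show 1 - (c/T)^2 = (T^2 - c^2) / T^2 by field_simp,
        Real.sqrt_div hTc2.le, Real.sqrt_sq hT0.le]
    rw [hF1, hsq]
    simp only [← hT, ← hS']
    field_simp
    ring
  -- second derivative
  set F2 : ℝ → ℝ := fun x => c * ((Real.cosh (x/(2*n))^2 - 1)^2 - s^2) /
      ((2*n)^2 * (Real.cosh (x/(2*n))^2 * Real.sqrt (Real.cosh (x/(2*n))^2 - c^2)^3)) with hF2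
  have hderiv2 : ∀ x ∈ Set.Ioi D, HasDerivAt F1 (F2 x) x := by
    intro x hx
    obtain ⟨hT2, hS0, hT1⟩ := hT_facts x hx
    have hT0 : 0 < Real.cosh (x/(2*n)) := by linarith
    have hTc2 : 0 < Real.cosh (x/(2*n))^2 - c^2 := by nlinarith
    have hR0 : 0 < Real.sqrt (Real.cosh (x/(2*n))^2 - c^2) := Real.sqrt_pos.mpr hTc2
    have hR2 : Real.sqrt (Real.cosh (x/(2*n))^2 - c^2) ^ 2 = Real.cosh (x/(2*n))^2 - c^2 :=
      Real.sq_sqrt hTc2.le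
    have hS2 : Real.sinh (x/(2*n))^2 = Real.cosh (x/(2*n))^2 - 1 := Real.sinh_sq _
    have hu : HasDerivAt (fun x : ℝ => x/(2*(n:ℝ))) (1/(2*n)) x := by
      simpa using (hasDerivAt_id x).div_const (2*(n:ℝ))
    have hTd : HasDerivAt (fun x : ℝ => Real.cosh (x/(2*n)))
        (Real.sinh (x/(2*n)) * (1/(2*n))) x := by
      have h := (Real.hasDerivAt_cosh (x/(2*n))).comp x hu; exact h
    have hSd : HasDerivAt (fun x : ℝ => Real.sinh (x/(2*n)))
        (Real.cosh (x/(2*n)) * (1/(2*n))) x := by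
      have h := (Real.hasDerivAt_sinh (x/(2*n))).comp x hu; exact h
    have hT2d : HasDerivAt (fun x : ℝ => Real.cosh (x/(2*n))^2 - c^2)
        (2 * Real.cosh (x/(2*n))^1 * (Real.sinh (x/(2*n)) * (1/(2*n)))) x := by
      have := (hTd.pow 2).sub_const (c^2)
      exact this.congr_deriv (by push_cast; ring)
    have hRd : HasDerivAt (fun x : ℝ => Real.sqrt (Real.cosh (x/(2*n))^2 - c^2))
        (1 / (2 * Real.sqrt (Real.cosh (x/(2*n))^2 - c^2)) *
          (2 * Real.cosh (x/(2*n))^1 * (Real.sinh (x/(2*n)) * (1/(2*n))))) x :=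
      (Real.hasDerivAt_sqrt hTc2.ne').comp x hT2d
    have hnum : HasDerivAt (fun x : ℝ => -(c * Real.sinh (x/(2*n))))
        (-(c * (Real.cosh (x/(2*n)) * (1/(2*n))))) x := (hSd.const_mul c).neg
    have hden : HasDerivAt (fun x : ℝ =>
        2*(n:ℝ) * (Real.cosh (x/(2*n)) * Real.sqrt (Real.cosh (x/(2*n))^2 - c^2)))
        (2*(n:ℝ) * (Real.sinh (x/(2*n)) * (1/(2*n)) * Real.sqrt (Real.cosh (x/(2*n))^2 - c^2) +
          Real.cosh (x/(2*n)) * (1 / (2 * Real.sqrt (Real.cosh (x/(2*n))^2 - c^2)) *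
            (2 * Real.cosh (x/(2*n))^1 * (Real.sinh (x/(2*n)) * (1/(2*n))))))) x :=
      (hTd.mul hRd).const_mul (2*(n:ℝ))
    have hden0 : 2*(n:ℝ) * (Real.cosh (x/(2*n)) * Real.sqrt (Real.cosh (x/(2*n))^2 - c^2)) ≠ 0 := by
      positivity
    have hq := hnum.div hden hden0
    refine hq.congr_deriv ?_
    exact Eq.symm <| alg c s n (Real.cosh (x/(2*n))) (Real.sinh (x/(2*n)))
      (Real.sqrt (Real.cosh (x/(2*n))^2 - c^2)) hnpos hT0 hR0 hR2 hS2 hcs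
  -- assemble
  apply strictConvexOn_of_deriv2_pos (convex_Ioi D)
  · apply Continuous.continuousOn
    exact Real.continuous_arcsin.comp (continuous_const.div
      (Real.continuous_cosh.comp (continuous_id.div_const _))
      (fun x => (Real.cosh_pos _).ne'))
  · intro x hx
    rw [interior_Ioi] at hx
    have hev : deriv (fun x => Real.arcsin (c / Real.cosh (x / (2 * n)))) =ᶠ[nhds x] F1 := by
      filter_upwards [isOpen_Ioi.mem_nhds hx] with y hy using (hderiv1 y hy).deriv
    obtain ⟨hT2, hS0, hT1⟩ := hT_facts x hx
    have hc2 : c^2 = 1 - s^2 := by linarith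
    have hTc2 : 0 < Real.cosh (x/(2*n))^2 - c^2 := by
      have := sq_nonneg s
      linarith
    have hR0 : 0 < Real.sqrt (Real.cosh (x/(2*n))^2 - c^2) := Real.sqrt_pos.mpr hTc2
    have h2 : deriv^[2] (fun x => Real.arcsin (c / Real.cosh (x / (2 * n)))) x = F2 x := by
      show deriv (deriv (fun x => Real.arcsin (c / Real.cosh (x / (2 * n))))) x = F2 x
      rw [hev.deriv_eq]
      exact (hderiv2 x hx).deriv
    rw [h2, hF2]
    have hnum : 0 < (Real.cosh (x/(2*n))^2 - 1)^2 - s^2 := by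
      have h1 : 0 < Real.cosh (x/(2*n))^2 - 1 - s := by linarith
      have h2 : 0 < Real.cosh (x/(2*n))^2 - 1 + s := by linarith
      nlinarith [mul_pos h1 h2]
    positivity
end
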